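/- arXiv:2406.18527 — 11 statements merged into one kernel-verified Lean document; each statement's English description precedes it below -/
import Mathlib

section
/- Let (X,d) be a quasi-metric space with quasi-subadditivity constant C_d (i.e., d(x,y) ≤ C_d · max{d(x,z), d(z,y)} for all x,y,z ∈ X). Then for every x ∈ X and r > 0, there exists a set E(x,r) ⊆ X that is open in the topology induced by d and satisfies B_d(x,r) ⊆ E(x,r) ⊆ B_d(x, C_d·r). -/
open Set MeasureTheory Topology
open scoped ENNReal NNReal

variable {X : Type*}

/-- The ball with respect to a quasi-metric `d`. -/
def qball (d : X → X → ℝ) (x : X) (r : ℝ) : Set X := {y | d x y < r}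

/-- The topology induced by a quasi-metric: a set is open iff every one of its
points admits a ball contained in the set. -/
def quasiMetricTopology (d : X → X → ℝ) : TopologicalSpace X where
  IsOpen O := ∀ x ∈ O, ∃ r > 0, qball d x r ⊆ O
  isOpen_univ := fun _ _ => ⟨1, one_pos, fun _ _ => trivial⟩
  isOpen_inter := by
    intro O₁ O₂ h₁ h₂ x hx
    obtain ⟨r₁, hr₁, hs₁⟩ := h₁ x hx.1
    obtain ⟨r₂, hr₂, hs₂⟩ := h₂ x hx.2
    refine ⟨min r₁ r₂, lt_min hr₁ hr₂, fun y hy => ⟨hs₁ ?_, hs₂ ?_⟩⟩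
    · exact lt_of_lt_of_le (show d x y < min r₁ r₂ from hy) (min_le_left _ _)
    · exact lt_of_lt_of_le (show d x y < min r₁ r₂ from hy) (min_le_right _ _)
  isOpen_sUnion := by
    intro S hS x hx
    obtain ⟨O, hO, hxO⟩ := hx
    obtain ⟨r, hr, hsub⟩ := hS O hO x hxO
    exact ⟨r, hr, fun y hy => ⟨O, hO, hsub hy⟩⟩

/-- for every center `x` and radius `r > 0` there is a set
`E` open in the topology induced by the quasi-metric `d` with
`B_d(x,r) ⊆ E ⊆ B_d(x, C_d·r)`. -/
theorem exists_open_between_balls (d : X → X → ℝ)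
    (hnn : ∀ x y, 0 ≤ d x y)
    (heq : ∀ x y, d x y = 0 ↔ x = y)
    (Csym : ℝ) (hCsym : 1 ≤ Csym) (hsym : ∀ x y, d y x ≤ Csym * d x y)
    (Cd : ℝ) (hCd : 1 ≤ Cd) (htri : ∀ x y z, d x y ≤ Cd * max (d x z) (d z y))
    (x : X) (r : ℝ) (hr : 0 < r) :
    ∃ E : Set X, IsOpen[quasiMetricTopology d] E ∧
      qball d x r ⊆ E ∧ E ⊆ qball d x (Cd * r) := by
  have hCd0 : (0:ℝ) < Cd := lt_of_lt_of_le one_pos hCd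
  -- E: points reachable from B(x,r) by chains with step i of length < r / Cd^(i+1)
  set E : Set X := {u | ∃ n : ℕ, ∃ c : ℕ → X, d x (c 0) < r ∧
      (∀ i < n, d (c i) (c (i+1)) < r / Cd ^ (i+1)) ∧ c n = u} with hE
  -- key chain lemma
  have chain : ∀ (j n : ℕ) (c : ℕ → X),
      (∀ i < n, d (c i) (c (i+1)) < r / Cd ^ (i+1)) →
      ∀ k, k + j = n → d (c k) (c n) < r / Cd ^ k := by
    intro j
    induction j with
    | zero =>
      intro n c hc k hk
      have hkn : k = n := by omega
      subst hkn
      have : d (c k) (c k) = 0 := (heq _ _).mpr rfl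
      rw [this]
      positivity
    | succ j ih =>
      intro n c hc k hk
      have h1 : d (c k) (c (k+1)) < r / Cd ^ (k+1) := hc k (by omega)
      have h2 : d (c (k+1)) (c n) < r / Cd ^ (k+1) := ih n c hc (k+1) (by omega)
      calc d (c k) (c n) ≤ Cd * max (d (c k) (c (k+1))) (d (c (k+1)) (c n)) :=
            htri _ _ _
        _ < Cd * (r / Cd ^ (k+1)) :=
            mul_lt_mul_of_pos_left (max_lt h1 h2) hCd0
        _ = r / Cd ^ k := by
            rw [pow_succ]
            field_simp
  refine ⟨E, ?_, ?_, ?_⟩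
  · -- openness
    intro u hu
    obtain ⟨n, c, h0, hs, hn⟩ := hu
    refine ⟨r / Cd ^ (n+1), by positivity, fun w hw => ?_⟩
    refine ⟨n+1, fun i => if i ≤ n then c i else w, ?_, ?_, ?_⟩
    · simpa using h0
    · intro i hi
      rcases lt_or_eq_of_le (Nat.lt_succ_iff.mp hi) with h | h
      · simp only [if_pos (le_of_lt h), if_pos (Nat.succ_le_of_lt h)]
        exact hs i h
      · subst h
        simp only [le_refl, if_pos, Nat.add_one_le_iff, lt_irrefl, if_neg,
          Nat.not_succ_le_self]
        rw [hn]
        exact hw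
    · simp
  · -- B(x,r) ⊆ E
    intro u hu
    exact ⟨0, fun _ => u, hu, fun i hi => absurd hi (Nat.not_lt_zero i), rfl⟩
  · -- E ⊆ B(x, Cd r)
    intro u hu
    obtain ⟨n, c, h0, hs, hn⟩ := hu
    have h1 : d (c 0) (c n) < r := by
      have := chain n n c hs 0 (by omega)
      simpa using this
    have : d x u ≤ Cd * max (d x (c 0)) (d (c 0) u) := htri _ _ _
    rw [← hn]
    calc d x (c n) ≤ Cd * max (d x (c 0)) (d (c 0) (c n)) := htri _ _ _
      _ < Cd * r := mul_lt_mul_of_pos_left (max_lt h0 h1) hCd0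
end

section
/- Let (X,d,μ) be a separable quasi-metric space equipped with a nonnegative Borel measure μ with μ(X) < ∞. Then for any ε > 0 there exists a closed and totally bounded set G_ε ⊆ X such that μ(X \ G_ε) < ε. -/
open Set MeasureTheory Topology
open scoped ENNReal NNReal

variable {X : Type*}

/-- A set is totally bounded w.r.t. the quasi-metric `d` if for every `r > 0`
it can be covered by finitely many `d`-balls of radius `r`. -/
def QTotallyBounded (d : X → X → ℝ) (S : Set X) : Prop :=
  ∀ r : ℝ, 0 < r → ∃ T : Set X, T.Finite ∧ S ⊆ ⋃ y ∈ T, qball d y r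

/-- The "open kernel" of a ball: points `y` such that every point sufficiently
`d`-close to `y` lies in `qball d x r`. -/
def oball (d : X → X → ℝ) (x : X) (r : ℝ) : Set X :=
  {y | ∃ ρ > 0, ∀ z, d y z < ρ → d x z < r}

section Aux

variable {d : X → X → ℝ} {Cd Csym : ℝ}

theorem oball_isOpen (hCd : 1 ≤ Cd) (htri : ∀ x y z, d x y ≤ Cd * max (d x z) (d z y))
    (x : X) (r : ℝ) : IsOpen[quasiMetricTopology d] (oball d x r) := by
  have hCd0 : (0:ℝ) < Cd := lt_of_lt_of_le one_pos hCd
  rintro y ⟨ρ, hρ, h⟩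
  refine ⟨ρ / Cd, by positivity, fun w hw => ⟨ρ / Cd, by positivity, fun z hz => ?_⟩⟩
  refine h z (lt_of_le_of_lt (htri y z w) ?_)
  have hm : max (d y w) (d w z) < ρ / Cd := max_lt hw hz
  calc Cd * max (d y w) (d w z) < Cd * (ρ / Cd) := mul_lt_mul_of_pos_left hm hCd0
    _ = ρ := by field_simp

theorem mem_oball_self (x : X) {r : ℝ} (hr : 0 < r) : x ∈ oball d x r :=
  ⟨r, hr, fun _ hz => hz⟩

theorem oball_subset_qball (heq : ∀ x y, d x y = 0 ↔ x = y) (x : X) (r : ℝ) :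
    oball d x r ⊆ qball d x r := by
  rintro y ⟨ρ, hρ, h⟩
  exact h y (by rw [(heq y y).2 rfl]; exact hρ)

theorem qball_subset_oball (hnn : ∀ x y, 0 ≤ d x y) (hCd : 1 ≤ Cd)
    (htri : ∀ x y z, d x y ≤ Cd * max (d x z) (d z y)) (x : X) (r : ℝ) :
    qball d x (r / Cd) ⊆ oball d x r := by
  have hCd0 : (0:ℝ) < Cd := lt_of_lt_of_le one_pos hCd
  intro y hy
  refine ⟨r / Cd, lt_of_le_of_lt (hnn x y) hy, fun z hz => ?_⟩
  refine lt_of_le_of_lt (htri x z y) ?_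
  calc Cd * max (d x y) (d y z) < Cd * (r / Cd) :=
        mul_lt_mul_of_pos_left (max_lt hy hz) hCd0
    _ = r := by field_simp

/-- The closure of a small ball is contained in a suitably larger ball. -/
theorem closure_qball_subset (heq : ∀ x y, d x y = 0 ↔ x = y)
    (hCsym : 1 ≤ Csym) (hsym : ∀ x y, d y x ≤ Csym * d x y)
    (hCd : 1 ≤ Cd) (htri : ∀ x y z, d x y ≤ Cd * max (d x z) (d z y))
    (x : X) {s r : ℝ} (hs : 0 < s) (hsr : Cd * (Csym * s) < r) :
    closure[quasiMetricTopology d] (qball d x s) ⊆ qball d x r := by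
  letI := quasiMetricTopology d
  have hCd0 : (0:ℝ) < Cd := lt_of_lt_of_le one_pos hCd
  have hCs0 : (0:ℝ) < Csym := lt_of_lt_of_le one_pos hCsym
  intro y hy
  obtain ⟨z, hzO, hzq⟩ := (mem_closure_iff.1 hy) (oball d y s)
    (oball_isOpen hCd htri y s) (mem_oball_self y hs)
  have h1 : d y z < s := oball_subset_qball heq y s hzO
  have h2 : d z y ≤ Csym * d y z := hsym y z
  have h3 : d x y ≤ Cd * max (d x z) (d z y) := htri x y z
  refine lt_of_le_of_lt h3 (lt_of_le_of_lt ?_ hsr)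
  have hzq' : d x z < s := hzq
  have : max (d x z) (d z y) ≤ Csym * s := by
    refine max_le (le_trans hzq'.le ?_) (le_trans h2 ?_)
    · nlinarith
    · nlinarith
  nlinarith

end Aux

/-- Ulam-like theorem: on a separable quasi-metric space with a
finite nonnegative Borel measure `μ`, for any `ε > 0` there is a closed and
totally bounded set `G` with `μ(X \ G) < ε`. -/
theorem ulam_like (d : X → X → ℝ)
    (hnn : ∀ x y, 0 ≤ d x y)
    (heq : ∀ x y, d x y = 0 ↔ x = y)
    (Csym : ℝ) (hCsym : 1 ≤ Csym) (hsym : ∀ x y, d y x ≤ Csym * d x y)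
    (Cd : ℝ) (hCd : 1 ≤ Cd) (htri : ∀ x y z, d x y ≤ Cd * max (d x z) (d z y))
    (hsep : @TopologicalSpace.SeparableSpace X (quasiMetricTopology d))
    [m : MeasurableSpace X]
    (hborel : ∀ s : Set X, IsOpen[quasiMetricTopology d] s → MeasurableSet s)
    (μ : Measure X) (hfin : μ Set.univ < ⊤)
    (ε : ℝ≥0∞) (hε : 0 < ε) :
    ∃ G : Set X, IsClosed[quasiMetricTopology d] G ∧ QTotallyBounded d G ∧
      μ Gᶜ < ε := by
  letI t := quasiMetricTopology d
  have hCd0 : (0:ℝ) < Cd := lt_of_lt_of_le one_pos hCd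
  have hCs0 : (0:ℝ) < Csym := lt_of_lt_of_le one_pos hCsym
  rcases isEmpty_or_nonempty X with hX | hX
  · refine ⟨∅, isClosed_empty, fun r hr => ⟨∅, finite_empty, by simp⟩, ?_⟩
    rw [compl_empty, Set.univ_eq_empty_iff.2 hX]
    simpa using hε
  -- dense sequence
  obtain ⟨u, hu⟩ := TopologicalSpace.exists_dense_seq X
  -- the open kernels around the dense sequence cover `X`
  have hcov : ∀ s : ℝ, 0 < s → (⋃ i, oball d (u i) s) = univ := by
    intro s hs
    refine eq_univ_iff_forall.2 fun x => ?_
    have hO : IsOpen (oball d x (s / (Cd * Csym))) := oball_isOpen hCd htri x _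
    have hxO : x ∈ oball d x (s / (Cd * Csym)) := mem_oball_self x (by positivity)
    obtain ⟨z, hzO, i, rfl⟩ := (mem_closure_iff.1 (hu x)) _ hO hxO
    have h1 : d x (u i) < s / (Cd * Csym) := oball_subset_qball heq x _ hzO
    have h2 : d (u i) x < s / Cd := by
      refine lt_of_le_of_lt (hsym x (u i)) ?_
      calc Csym * d x (u i) < Csym * (s / (Cd * Csym)) := mul_lt_mul_of_pos_left h1 hCs0
        _ = s / Cd := by field_simp
    have : x ∈ qball d (u i) (s / Cd) := h2
    exact mem_iUnion.2 ⟨i, qball_subset_oball hnn hCd htri (u i) s this⟩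
  -- choose finite subcovers with small complements
  set δ : ℝ≥0∞ := min ε 1 with hδdef
  have hδ0 : 0 < δ := lt_min hε zero_lt_one
  have hδtop : δ ≠ ⊤ := ne_top_of_le_ne_top ENNReal.one_ne_top (min_le_right _ _)
  have key : ∀ k : ℕ, ∃ n : ℕ,
      μ (⋃ i ∈ Finset.range n, oball d (u i) (1 / (k + 1 : ℝ)))ᶜ < δ / 2 ^ (k + 2) := by
    intro k
    set s : ℝ := 1 / (k + 1 : ℝ) with hsdef
    have hs : 0 < s := by positivity
    set B : ℕ → Set X := fun n => (⋃ i ∈ Finset.range n, oball d (u i) s)ᶜ with hB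
    have hmeas : ∀ n, MeasurableSet (B n) := fun n =>
      (hborel _ (isOpen_biUnion fun i _ => oball_isOpen hCd htri (u i) s)).compl
    have hanti : Antitone B := fun a b hab =>
      compl_subset_compl.2 (biUnion_subset_biUnion_left (Finset.range_subset_range.2 hab))
    have hUU : (⋃ n, ⋃ i ∈ Finset.range n, oball d (u i) s) = ⋃ i, oball d (u i) s := by
      ext w
      simp only [mem_iUnion, Finset.mem_range]
      exact ⟨fun ⟨nn, i, _, h⟩ => ⟨i, h⟩, fun ⟨i, h⟩ => ⟨i + 1, i, Nat.lt_succ_self i, h⟩⟩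
    have hiInter : ⋂ n, B n = ∅ := by
      rw [← compl_iUnion, ← compl_univ]
      congr 1
      rw [hUU, hcov s hs]
    have htend : Filter.Tendsto (μ ∘ B) Filter.atTop (nhds 0) := by
      have := tendsto_measure_iInter_atTop (μ := μ)
        (fun n => (hmeas n).nullMeasurableSet) hanti
        ⟨0, (lt_of_le_of_lt (measure_mono (subset_univ _)) hfin).ne⟩
      rwa [hiInter, measure_empty] at this
    have hpos : 0 < δ / 2 ^ (k + 2) :=
      ENNReal.div_pos hδ0.ne' (by simp [ENNReal.pow_ne_top])
    exact (htend.eventually (gt_mem_nhds hpos)).exists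
  choose n hn using key
  set A : ℕ → Set X := fun k => ⋃ i ∈ Finset.range (n k), oball d (u i) (1 / (k + 1 : ℝ))
    with hA
  set F : Set X := ⋂ k, A k with hF
  refine ⟨closure F, isClosed_closure, ?_, ?_⟩
  · -- totally bounded
    intro r hr
    obtain ⟨k, hk⟩ := exists_nat_gt (Cd * Csym / r)
    have hk' : Cd * (Csym * (1 / (k + 1 : ℝ))) < r := by
      rw [div_lt_iff₀ hr] at hk
      have hpos : (0:ℝ) < (k:ℝ) + 1 := by positivity
      have : Cd * (Csym * (1 / (k + 1 : ℝ))) = Cd * Csym / ((k:ℝ) + 1) := by ring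
      rw [this, div_lt_iff₀ hpos]
      nlinarith [Nat.cast_nonneg (α := ℝ) k]
    set s : ℝ := 1 / (k + 1 : ℝ) with hsdef
    have hs : 0 < s := by positivity
    refine ⟨u '' ↑(Finset.range (n k)), ((Finset.range (n k)).finite_toSet.image u), ?_⟩
    have hsub1 : closure F ⊆ ⋃ i ∈ Finset.range (n k), closure (qball d (u i) s) := by
      refine closure_minimal ?_ ((Finset.range (n k)).finite_toSet.isClosed_biUnion
        fun i _ => isClosed_closure)
      refine (iInter_subset _ k).trans ?_
      exact iUnion₂_mono fun i _ => (oball_subset_qball heq (u i) s).trans subset_closure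
    refine hsub1.trans ?_
    rw [Set.biUnion_image]
    exact iUnion₂_mono fun i _ => closure_qball_subset heq hCsym hsym hCd htri (u i) hs hk'
  · -- measure estimate
    have hsub : (closure F)ᶜ ⊆ ⋃ k, (A k)ᶜ := by
      rw [← compl_iInter]
      exact compl_subset_compl.2 subset_closure
    have e1 : ∀ k : ℕ, δ / 2 ^ (k + 2) = δ * 2⁻¹ ^ 2 * 2⁻¹ ^ k := by
      intro k
      rw [div_eq_mul_inv, pow_add,
        ENNReal.mul_inv (Or.inl (by norm_num)) (Or.inl (by norm_num)),
        ENNReal.inv_pow, ENNReal.inv_pow, mul_comm ((2:ℝ≥0∞)⁻¹ ^ k) _, ← mul_assoc]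
    have e2 : ((2:ℝ≥0∞)⁻¹) ^ 2 * 2 = 2⁻¹ := by
      rw [sq, mul_assoc, ENNReal.inv_mul_cancel (by norm_num) (by norm_num), mul_one]
    calc μ (closure F)ᶜ ≤ μ (⋃ k, (A k)ᶜ) := measure_mono hsub
      _ ≤ ∑' k, μ (A k)ᶜ := measure_iUnion_le _
      _ ≤ ∑' k : ℕ, δ / 2 ^ (k + 2) := ENNReal.tsum_le_tsum fun k => (hn k).le
      _ = δ / 2 := by
          simp_rw [e1]
          rw [ENNReal.tsum_mul_left, ENNReal.tsum_geometric, ENNReal.one_sub_inv_two,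
            inv_inv, mul_assoc, e2, div_eq_mul_inv]
      _ < δ := ENNReal.half_lt_self hδ0.ne' hδtop
      _ ≤ ε := min_le_left _ _
end

section
/- A quasi-metric space (X,d) is separable if and only if there exists a nonnegative Borel measure on (X,d) such that all balls with respect to d are measurable and have positive and finite measure. -/
open Set MeasureTheory Topology
open scoped ENNReal NNReal

variable {X : Type*}

/-- Every ball contains an open set (for the quasi-metric topology) containing its center. -/
lemma qball_nbhd (d : X → X → ℝ) (Cd : ℝ) (hCd : 1 ≤ Cd)
    (htri : ∀ x y z, d x y ≤ Cd * max (d x z) (d z y))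
    (h0 : ∀ x : X, d x x = 0) (x : X) (r : ℝ) (hr : 0 < r) :
    ∃ V : Set X, IsOpen[quasiMetricTopology d] V ∧ x ∈ V ∧ V ⊆ qball d x r := by
  have hCd0 : 0 < Cd := lt_of_lt_of_le one_pos hCd
  refine ⟨{z | ∃ s > 0, qball d z s ⊆ qball d x r}, ?_, ⟨r, hr, fun _ h => h⟩, ?_⟩
  · intro z hz
    obtain ⟨s, hs, hsub⟩ := hz
    refine ⟨s / Cd, div_pos hs hCd0, fun w hw => ?_⟩
    refine ⟨s / Cd, div_pos hs hCd0, fun y hy => ?_⟩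
    refine hsub (show d z y < s from ?_)
    calc d z y ≤ Cd * max (d z w) (d w y) := htri z y w
    _ < Cd * (s / Cd) := mul_lt_mul_of_pos_left (max_lt hw hy) hCd0
    _ = s := mul_div_cancel₀ s (ne_of_gt hCd0)
  · rintro z ⟨s, hs, hsub⟩
    exact hsub (show d z z < s from (h0 z) ▸ hs)

/-- a quasi-metric space is separable iff there exists a
nonnegative Borel measure for which all `d`-balls are measurable and have
positive and finite measure. -/
theorem separable_iff_exists_measure (d : X → X → ℝ)
    (hnn : ∀ x y, 0 ≤ d x y)
    (heq : ∀ x y, d x y = 0 ↔ x = y)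
    (Csym : ℝ) (hCsym : 1 ≤ Csym) (hsym : ∀ x y, d y x ≤ Csym * d x y)
    (Cd : ℝ) (hCd : 1 ≤ Cd) (htri : ∀ x y z, d x y ≤ Cd * max (d x z) (d z y)) :
    @TopologicalSpace.SeparableSpace X (quasiMetricTopology d) ↔
      ∃ (m : MeasurableSpace X) (μ : @Measure X m),
        (∀ s : Set X, IsOpen[quasiMetricTopology d] s → @MeasurableSet X m s) ∧
        (∀ (x : X) (r : ℝ), 0 < r →
          @MeasurableSet X m (qball d x r) ∧
          0 < μ (qball d x r) ∧ μ (qball d x r) < ⊤) := by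
  letI : TopologicalSpace X := quasiMetricTopology d
  have h0 : ∀ x : X, d x x = 0 := fun x => (heq x x).mpr rfl
  have hCd0 : (0:ℝ) < Cd := lt_of_lt_of_le one_pos hCd
  have hCsym0 : (0:ℝ) < Csym := lt_of_lt_of_le one_pos hCsym
  constructor
  · intro hsep
    by_cases hX : Nonempty X
    · haveI := hsep
      obtain ⟨s, hsc, hsd⟩ := TopologicalSpace.exists_countable_dense X
      obtain ⟨f, hf⟩ := hsc.exists_eq_range (hsd.nonempty)
      letI mT : MeasurableSpace X := ⊤
      refine ⟨⊤, Measure.sum (fun n => ((2:ℝ≥0∞)⁻¹ ^ n) • @Measure.dirac X ⊤ (f n)),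
        fun s _ => MeasurableSpace.measurableSet_top, fun x r hr => ?_⟩
      refine ⟨MeasurableSpace.measurableSet_top, ?_, ?_⟩
      · -- positivity
        obtain ⟨V, hVopen, hxV, hVsub⟩ := qball_nbhd d Cd hCd htri h0 x r hr
        obtain ⟨y, hyV, hys⟩ := hsd.inter_open_nonempty V hVopen ⟨x, hxV⟩
        rw [hf] at hys
        obtain ⟨n, rfl⟩ := hys
        have hmem : f n ∈ qball d x r := hVsub hyV
        have hle : ((2:ℝ≥0∞)⁻¹ ^ n • @Measure.dirac X ⊤ (f n)) (qball d x r) ≤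
            (Measure.sum (fun n => ((2:ℝ≥0∞)⁻¹ ^ n) • @Measure.dirac X ⊤ (f n))) (qball d x r) :=
          Measure.le_iff'.mp (Measure.le_sum _ n) _
        refine lt_of_lt_of_le ?_ hle
        rw [Measure.smul_apply, smul_eq_mul, Measure.dirac_apply_of_mem hmem, mul_one]
        exact ENNReal.pow_pos (ENNReal.inv_pos.mpr ENNReal.ofNat_ne_top) n
      · -- finiteness
        refine lt_of_le_of_lt (measure_mono (subset_univ _)) ?_
        rw [Measure.sum_apply _ MeasurableSet.univ]
        have : ∀ n : ℕ, ((2:ℝ≥0∞)⁻¹ ^ n • @Measure.dirac X ⊤ (f n)) univ = (2:ℝ≥0∞)⁻¹ ^ n := by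
          intro n
          rw [Measure.smul_apply, smul_eq_mul, Measure.dirac_apply_of_mem (mem_univ _), mul_one]
        simp only [this, ENNReal.tsum_geometric, ENNReal.one_sub_inv_two, inv_inv]
        exact ENNReal.ofNat_lt_top
    · exact ⟨⊤, 0, fun s _ => MeasurableSpace.measurableSet_top,
        fun x r hr => (hX ⟨x⟩).elim⟩
  · rintro ⟨m, μ, hopen, hball⟩
    by_cases hX : Nonempty X
    · obtain ⟨x0⟩ := hX
      -- maximal separated families
      have key : ∀ n k : ℕ, ∃ F : Set X,
          Maximal (· ∈ {F : Set X | F ⊆ qball d x0 ((n:ℝ)+1) ∧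
            F.Pairwise fun y z =>
              Disjoint (qball d y (1/((k:ℝ)+1))) (qball d z (1/((k:ℝ)+1)))}) F := by
        intro n k
        apply zorn_subset
        intro c hc hchain
        refine ⟨⋃₀ c, ⟨sUnion_subset fun t ht => (hc ht).1, ?_⟩,
          fun s hs => subset_sUnion_of_mem hs⟩
        intro y hy z hz hne
        obtain ⟨ty, hty, hyty⟩ := hy
        obtain ⟨tz, htz, hztz⟩ := hz
        rcases hchain.total hty htz with h | h
        · exact (hc htz).2 (h hyty) hztz hne
        · exact (hc hty).2 hyty (h hztz) hne
      choose F hF using key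
      have hρpos : ∀ k : ℕ, (0:ℝ) < 1/((k:ℝ)+1) := by
        intro k; positivity
      have hcnt : ∀ n k : ℕ, (F n k).Countable := by
        intro n k
        have hdis : Pairwise (Function.onFun Disjoint fun i : F n k => qball d (i:X) (1/((k:ℝ)+1))) := by
          intro i j hij
          exact (hF n k).1.2 i.2 j.2 (fun h => hij (Subtype.coe_injective h))
        have hsub : (⋃ i : F n k, qball d (i:X) (1/((k:ℝ)+1))) ⊆ qball d x0 (Cd*((n:ℝ)+2)) := by
          rintro w hw
          obtain ⟨i, hw⟩ := mem_iUnion.mp hw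
          have h1 : d x0 (i:X) < (n:ℝ)+2 :=
            lt_trans ((hF n k).1.1 i.2) (by linarith)
          have h2 : d (i:X) w < (n:ℝ)+2 := by
            refine lt_of_lt_of_le hw ?_
            have : (1:ℝ)/((k:ℝ)+1) ≤ 1 := by
              rw [div_le_one (by positivity)]; linarith [Nat.cast_nonneg (α := ℝ) k]
            have hn2 : (1:ℝ) ≤ (n:ℝ)+2 := by linarith [Nat.cast_nonneg (α := ℝ) n]
            linarith
          show d x0 w < Cd*((n:ℝ)+2)
          calc d x0 w ≤ Cd * max (d x0 (i:X)) (d (i:X) w) := htri x0 w i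
          _ < Cd * ((n:ℝ)+2) := mul_lt_mul_of_pos_left (max_lt h1 h2) hCd0
        have hfin : μ (⋃ i : F n k, qball d (i:X) (1/((k:ℝ)+1))) ≠ ⊤ := by
          refine ne_of_lt (lt_of_le_of_lt (measure_mono hsub) ?_)
          exact (hball x0 _ (by positivity)).2.2
        have hc := MeasureTheory.Measure.countable_meas_pos_of_disjoint_of_meas_iUnion_ne_top μ
          (fun i : F n k => (hball (i:X) _ (hρpos k)).1) hdis hfin
        have huniv : (univ : Set (F n k)).Countable :=
          hc.mono (fun i _ => (hball (i:X) _ (hρpos k)).2.1)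
        exact Set.countable_coe_iff.mp (Set.countable_univ_iff.mp huniv)
      refine ⟨⟨insert x0 (⋃ n, ⋃ k, F n k),
        (Set.countable_iUnion fun n => Set.countable_iUnion fun k => hcnt n k).insert x0, ?_⟩⟩
      rw [dense_iff_inter_open]
      intro U hU hUne
      obtain ⟨x, hx⟩ := hUne
      obtain ⟨r, hr, hsubU⟩ := hU x hx
      obtain ⟨n, hn⟩ := exists_nat_gt (d x0 x)
      have hxball : x ∈ qball d x0 ((n:ℝ)+1) :=
        show d x0 x < (n:ℝ)+1 from lt_trans hn (lt_add_one _)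
      obtain ⟨k, hk⟩ := exists_nat_gt (Cd*Csym/r)
      set ρ : ℝ := 1/((k:ℝ)+1) with hρ
      have hk1 : (0:ℝ) < (k:ℝ)+1 := by positivity
      have hρr : Cd * Csym * ρ < r := by
        have h1 : Cd*Csym/r < (k:ℝ)+1 := lt_trans hk (lt_add_one _)
        rw [div_lt_iff₀ hr] at h1
        rw [hρ, mul_one_div, div_lt_iff₀ hk1]
        linarith
      by_cases hxF : x ∈ F n k
      · exact ⟨x, hx, Or.inr (mem_iUnion.mpr ⟨n, mem_iUnion.mpr ⟨k, hxF⟩⟩)⟩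
      · have hex : ∃ y ∈ F n k, ¬ Disjoint (qball d x ρ) (qball d y ρ) := by
          by_contra hcon
          push_neg at hcon
          have hmem : insert x (F n k) ∈ {F : Set X | F ⊆ qball d x0 ((n:ℝ)+1) ∧
              F.Pairwise fun y z => Disjoint (qball d y ρ) (qball d z ρ)} := by
            refine ⟨insert_subset hxball (hF n k).1.1, ?_⟩
            rw [Set.pairwise_insert]
            exact ⟨(hF n k).1.2, fun y hy _ => ⟨hcon y hy, (hcon y hy).symm⟩⟩
          have := (hF n k).2 hmem (subset_insert x _)
          exact hxF (this (mem_insert x _))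
        obtain ⟨y, hyF, hnd⟩ := hex
        obtain ⟨z, hz1, hz2⟩ := Set.not_disjoint_iff.mp hnd
        have hzy : d z y ≤ Csym * d y z := hsym y z
        have hxy : d x y < r := by
          have hmax : max (d x z) (d z y) < Csym * ρ := by
            refine max_lt (lt_of_lt_of_le hz1 ?_) ?_
            · exact le_mul_of_one_le_left (le_of_lt (hρpos k)) hCsym
            · exact lt_of_le_of_lt hzy (mul_lt_mul_of_pos_left hz2 hCsym0)
          calc d x y ≤ Cd * max (d x z) (d z y) := htri x y z
          _ < Cd * (Csym * ρ) := mul_lt_mul_of_pos_left hmax hCd0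
          _ = Cd * Csym * ρ := by ring
          _ < r := hρr
        exact ⟨y, hsubU hxy, Or.inr (mem_iUnion.mpr ⟨n, mem_iUnion.mpr ⟨k, hyF⟩⟩)⟩
    · have hE : IsEmpty X := not_nonempty_iff.mp hX
      exact ⟨⟨∅, countable_empty, fun x => (hE.false x).elim⟩⟩
end

section
/- Let (X,d,μ) be a quasi-metric-measure space (all d-balls measurable with positive finite measure). Then (X,d) is totally bounded if and only if μ(X) < ∞ and for every r > 0, inf_{x ∈ X} μ(B_d(x,r)) > 0. -/
open Set MeasureTheory Topology
open scoped ENNReal NNReal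

variable {X : Type*}

/-- a quasi-metric-measure space is totally bounded iff the
measure is finite and balls of each fixed radius have measure uniformly
bounded away from zero. -/
theorem totallyBounded_iff_finite_and_inf_ball_pos (d : X → X → ℝ)
    [m : MeasurableSpace X]
    (hnn : ∀ x y, 0 ≤ d x y)
    (heq : ∀ x y, d x y = 0 ↔ x = y)
    (Csym : ℝ) (hCsym : 1 ≤ Csym) (hsym : ∀ x y, d y x ≤ Csym * d x y)
    (Cd : ℝ) (hCd : 1 ≤ Cd) (htri : ∀ x y z, d x y ≤ Cd * max (d x z) (d z y))
    (hborel : ∀ s : Set X, IsOpen[quasiMetricTopology d] s → MeasurableSet s)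
    (μ : Measure X)
    (hmeasB : ∀ (x : X) (r : ℝ), 0 < r → MeasurableSet (qball d x r))
    (hposB : ∀ (x : X) (r : ℝ), 0 < r → 0 < μ (qball d x r))
    (hfinB : ∀ (x : X) (r : ℝ), 0 < r → μ (qball d x r) < ⊤)
    :
    (∀ r : ℝ, 0 < r → ∃ T : Set X, T.Finite ∧ Set.univ ⊆ ⋃ y ∈ T, qball d y r) ↔
      (μ Set.univ < ⊤ ∧ ∀ r : ℝ, 0 < r → 0 < ⨅ x : X, μ (qball d x r)) := by
  have hCd0 : (0:ℝ) < Cd := lt_of_lt_of_le one_pos hCd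
  have hCs0 : (0:ℝ) < Csym := lt_of_lt_of_le one_pos hCsym
  constructor
  · intro htb
    constructor
    · obtain ⟨T, hTfin, hTcov⟩ := htb 1 one_pos
      calc μ Set.univ ≤ μ (⋃ y ∈ T, qball d y 1) := measure_mono hTcov
        _ < ⊤ := measure_biUnion_lt_top hTfin (fun y _ => hfinB y 1 one_pos)
    · intro r hr
      set ρ := r / (2 * Cd * Csym) with hρdef
      have hρ : 0 < ρ := by positivity
      have hkey : Cd * (Csym * ρ) = r / 2 := by
        rw [hρdef]; field_simp
      -- containment: if d y x < ρ then qball d y ρ ⊆ qball d x r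
      have hsub : ∀ x y : X, d y x < ρ → qball d y ρ ⊆ qball d x r := by
        intro x y hyx z hz
        have hz' : d y z < ρ := hz
        have hxy : d x y ≤ Csym * d y x := hsym y x
        have hmax : max (d x y) (d y z) < Csym * ρ :=
          max_lt (hxy.trans_lt (mul_lt_mul_of_pos_left hyx hCs0))
            (hz'.trans_le (le_mul_of_one_le_left hρ.le hCsym))
        have : d x z < r := by
          calc d x z ≤ Cd * max (d x y) (d y z) := htri x z y
            _ < Cd * (Csym * ρ) := mul_lt_mul_of_pos_left hmax hCd0
            _ = r / 2 := hkey
            _ < r := by linarith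
        exact this
      rcases isEmpty_or_nonempty X with hX | hX
      · rw [iInf_of_empty]; exact ENNReal.zero_lt_top
      · obtain ⟨T, hTfin, hTcov⟩ := htb ρ hρ
        -- finite set as Finset
        set F := hTfin.toFinset with hF
        have hFne : F.Nonempty := by
          obtain ⟨x0⟩ := hX
          have := hTcov (Set.mem_univ x0)
          simp only [Set.mem_iUnion] at this
          obtain ⟨y, hy, -⟩ := this
          exact ⟨y, hTfin.mem_toFinset.2 hy⟩
        set ε := F.inf' hFne (fun y => μ (qball d y ρ)) with hε
        have hεpos : 0 < ε := by
          rw [hε, Finset.lt_inf'_iff]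
          exact fun y _ => hposB y ρ hρ
        refine lt_of_lt_of_le hεpos (le_iInf fun x => ?_)
        have := hTcov (Set.mem_univ x)
        simp only [Set.mem_iUnion] at this
        obtain ⟨y, hy, hxy⟩ := this
        have h1 : ε ≤ μ (qball d y ρ) :=
          Finset.inf'_le _ (hTfin.mem_toFinset.2 hy)
        exact h1.trans (measure_mono (hsub x y hxy))
  · rintro ⟨hfin, hinf⟩ r hr
    classical
    by_contra hcon
    push_neg at hcon
    set ρ := r / (2 * Cd * Csym) with hρdef
    have hρ : 0 < ρ := by positivity
    have hkey : Cd * (Csym * ρ) = r / 2 := by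
      rw [hρdef]; field_simp
    -- if two balls of radius ρ intersect, centers are at distance < r (both ways)
    have hlt : ∀ a b z : X, d a z < ρ → d b z < ρ → d a b < r := by
      intro a b z h1 h2
      have hzb : d z b ≤ Csym * d b z := hsym b z
      have hmax : max (d a z) (d z b) < Csym * ρ :=
        max_lt (h1.trans_le (le_mul_of_one_le_left hρ.le hCsym))
          (hzb.trans_lt (mul_lt_mul_of_pos_left h2 hCs0))
      calc d a b ≤ Cd * max (d a z) (d z b) := htri a b z
        _ < Cd * (Csym * ρ) := mul_lt_mul_of_pos_left hmax hCd0
        _ = r / 2 := hkey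
        _ < r := by linarith
    -- build arbitrarily large (r-)separated finite sets
    have hsep : ∀ n : ℕ, ∃ s : Finset X, s.card = n ∧
        ∀ x ∈ s, ∀ y ∈ s, x ≠ y → r ≤ max (d x y) (d y x) := by
      intro n
      induction n with
      | zero => exact ⟨∅, rfl, by simp⟩
      | succ n ih =>
        obtain ⟨s, hcard, hs⟩ := ih
        have hnc := hcon (↑s : Set X) s.finite_toSet
        rw [Set.not_subset] at hnc
        obtain ⟨z, -, hz⟩ := hnc
        simp only [Set.mem_iUnion, not_exists] at hz
        have hz' : ∀ y ∈ s, r ≤ d y z := fun y hy =>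
          not_lt.1 (hz y (Finset.mem_coe.2 hy))
        have hzs : z ∉ s := fun hzs => by
          have h0 : d z z = 0 := (heq z z).2 rfl
          have := hz' z hzs
          rw [h0] at this
          linarith
        refine ⟨insert z s, by rw [Finset.card_insert_of_notMem hzs, hcard], ?_⟩
        intro x hx y hy hxy
        rcases Finset.mem_insert.1 hx with hxz | hx
        · rcases Finset.mem_insert.1 hy with hyz | hy
          · exact absurd (hxz.trans hyz.symm) hxy
          · rw [hxz]; exact le_max_of_le_right (hz' y hy)
        · rcases Finset.mem_insert.1 hy with hyz | hy
          · rw [hyz]; exact le_max_of_le_left (hz' x hx)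
          · exact hs x hx y hy hxy
    have hεpos : 0 < ⨅ x : X, μ (qball d x ρ) := hinf ρ hρ
    set ε := ⨅ x : X, μ (qball d x ρ) with hεdef
    have hdivtop : μ Set.univ / ε ≠ ⊤ := (ENNReal.div_lt_top hfin.ne hεpos.ne').ne
    obtain ⟨n, hn⟩ := ENNReal.exists_nat_gt hdivtop
    obtain ⟨s, hcard, hsepn⟩ := hsep n
    have hdisj : (↑s : Set X).PairwiseDisjoint (fun y => qball d y ρ) := by
      intro a ha b hb hab
      refine Set.disjoint_left.2 fun z hza hzb => ?_
      have h1 : d a b < r := hlt a b z hza hzb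
      have h2 : d b a < r := hlt b a z hzb hza
      exact absurd (hsepn a (Finset.mem_coe.1 ha) b (Finset.mem_coe.1 hb) hab)
        (not_le.2 (max_lt h1 h2))
    have hsum : μ (⋃ y ∈ s, qball d y ρ) = ∑ y ∈ s, μ (qball d y ρ) :=
      measure_biUnion_finset hdisj (fun y _ => hmeasB y ρ hρ)
    have hge : (n : ℝ≥0∞) * ε ≤ μ Set.univ := by
      calc (n : ℝ≥0∞) * ε = ∑ _y ∈ s, ε := by
            rw [Finset.sum_const, hcard]; simp [nsmul_eq_mul]
        _ ≤ ∑ y ∈ s, μ (qball d y ρ) :=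
            Finset.sum_le_sum fun y _ => iInf_le _ y
        _ = μ (⋃ y ∈ s, qball d y ρ) := hsum.symm
        _ ≤ μ Set.univ := measure_mono (Set.subset_univ _)
    have hlt' : μ Set.univ < (n : ℝ≥0∞) * ε := by
      rwa [ENNReal.div_lt_iff (Or.inl hεpos.ne') (Or.inr hfin.ne)] at hn
    exact absurd hge (not_le.2 hlt')
end

section
/- Let (X,d,μ) be a quasi-metric-measure space and c ∈ (1,∞). Then (X,d) is totally bounded if and only if (X,d) is bounded and μ is (c,δ)-doubling for every δ ∈ (0, diam_d(X)]. -/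
open Set MeasureTheory Topology
open scoped ENNReal NNReal

variable {X : Type*}

/-- `μ` is `(c,δ)`-doubling w.r.t. `d` : `μ(B(x,cδ)) ≤ C(δ)·μ(B(x,δ))` for
all `x`, for some constant `C(δ) ∈ [1,∞)`. -/
def CDeltaDoubling [MeasurableSpace X] (d : X → X → ℝ) (μ : MeasureTheory.Measure X)
    (c δ : ℝ) : Prop :=
  ∃ C : ℝ, 1 ≤ C ∧ ∀ x : X, μ (qball d x (c * δ)) ≤ ENNReal.ofReal C * μ (qball d x δ)

/-- The (extended-real-valued) diameter of a quasi-metric space. -/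
noncomputable def qdiam (d : X → X → ℝ) : ℝ≥0∞ :=
  ⨆ (x : X) (y : X), ENNReal.ofReal (d x y)

/-- for `c > 1`, a quasi-metric-measure space is totally bounded
iff it is bounded and `μ` is `(c,δ)`-doubling for every `δ ∈ (0, diam_d X]`. -/
theorem totallyBounded_iff_bounded_and_cdeltaDoubling (d : X → X → ℝ)
    [m : MeasurableSpace X]
    (hnn : ∀ x y, 0 ≤ d x y)
    (heq : ∀ x y, d x y = 0 ↔ x = y)
    (Csym : ℝ) (hCsym : 1 ≤ Csym) (hsym : ∀ x y, d y x ≤ Csym * d x y)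
    (Cd : ℝ) (hCd : 1 ≤ Cd) (htri : ∀ x y z, d x y ≤ Cd * max (d x z) (d z y))
    (hborel : ∀ s : Set X, IsOpen[quasiMetricTopology d] s → MeasurableSet s)
    (μ : Measure X)
    (hmeasB : ∀ (x : X) (r : ℝ), 0 < r → MeasurableSet (qball d x r))
    (hposB : ∀ (x : X) (r : ℝ), 0 < r → 0 < μ (qball d x r))
    (hfinB : ∀ (x : X) (r : ℝ), 0 < r → μ (qball d x r) < ⊤)
    (c : ℝ) (hc : 1 < c) :
    (∀ r : ℝ, 0 < r → ∃ T : Set X, T.Finite ∧ Set.univ ⊆ ⋃ y ∈ T, qball d y r) ↔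
      (qdiam d < ⊤ ∧
        ∀ δ : ℝ, 0 < δ → ENNReal.ofReal δ ≤ qdiam d → CDeltaDoubling d μ c δ) := by
  rcases isEmpty_or_nonempty X with hX | hX
  · constructor
    · intro _
      refine ⟨?_, fun δ hδ _ => ⟨1, le_refl 1, fun x => (IsEmpty.false x).elim⟩⟩
      simp only [qdiam, iSup_of_empty]
      exact bot_lt_top
    · intro _ r hr
      exact ⟨∅, Set.finite_empty, fun x _ => (IsEmpty.false x).elim⟩
  · obtain ⟨x₀⟩ := hX
    have hCd0 : (0:ℝ) < Cd := lt_of_lt_of_le one_pos hCd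
    have hCs0 : (0:ℝ) < Csym := lt_of_lt_of_le one_pos hCsym
    constructor
    · -- totally bounded → bounded and doubling
      intro htb
      -- boundedness first
      obtain ⟨T, hTfin, hTcov⟩ := htb 1 one_pos
      obtain ⟨M₀, hM₀⟩ := (hTfin.image2 d hTfin).bddAbove
      have hM₀' : ∀ a ∈ T, ∀ b ∈ T, d a b ≤ M₀ := fun a ha b hb =>
        hM₀ (Set.mem_image2_of_mem ha hb)
      have hbound : ∀ x y, d x y ≤ Cd * max (Cd * max Csym M₀) 1 := by
        intro x y
        obtain ⟨a, ha, hax⟩ := Set.mem_iUnion₂.mp (hTcov (Set.mem_univ x))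
        obtain ⟨b, hb, hby⟩ := Set.mem_iUnion₂.mp (hTcov (Set.mem_univ y))
        have hax : d a x < 1 := hax
        have hby : d b y < 1 := hby
        have hxb : d x b ≤ Cd * max Csym M₀ := by
          calc d x b ≤ Cd * max (d x a) (d a b) := htri x b a
            _ ≤ Cd * max Csym M₀ := by
                apply mul_le_mul_of_nonneg_left _ hCd0.le
                apply max_le_max _ (hM₀' a ha b hb)
                calc d x a ≤ Csym * d a x := hsym a x
                  _ ≤ Csym * 1 := mul_le_mul_of_nonneg_left hax.le hCs0.le
                  _ = Csym := mul_one _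
        calc d x y ≤ Cd * max (d x b) (d b y) := htri x y b
          _ ≤ Cd * max (Cd * max Csym M₀) 1 :=
            mul_le_mul_of_nonneg_left (max_le_max hxb hby.le) hCd0.le
      have hdiam : qdiam d < ⊤ := by
        exact lt_of_le_of_lt (iSup₂_le fun x y => ENNReal.ofReal_le_ofReal (hbound x y))
          ENNReal.ofReal_lt_top
      refine ⟨hdiam, ?_⟩
      -- μ univ < ∞
      have hDle : ∀ y, d x₀ y ≤ (qdiam d).toReal := by
        intro y
        have h1 : ENNReal.ofReal (d x₀ y) ≤ qdiam d :=
          le_trans (le_iSup (fun z => ENNReal.ofReal (d x₀ z)) y)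
            (le_iSup (fun x => ⨆ z, ENNReal.ofReal (d x z)) x₀)
        have := ENNReal.toReal_mono hdiam.ne h1
        rwa [ENNReal.toReal_ofReal (hnn x₀ y)] at this
      have hunivsub : Set.univ ⊆ qball d x₀ ((qdiam d).toReal + 1) := by
        intro y _
        exact lt_of_le_of_lt (hDle y) (lt_add_one _)
      have hRpos : 0 < (qdiam d).toReal + 1 :=
        lt_of_lt_of_le one_pos (le_add_of_nonneg_left ENNReal.toReal_nonneg)
      have hμfin : μ Set.univ < ⊤ :=
        lt_of_le_of_lt (measure_mono hunivsub) (hfinB x₀ _ hRpos)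
      -- doubling
      intro δ hδ _
      have hCdCs : (0:ℝ) < Cd * Csym := mul_pos hCd0 hCs0
      set r := δ / (Cd * Csym) with hrdef
      have hrpos : 0 < r := div_pos hδ hCdCs
      obtain ⟨S, hSfin, hScov⟩ := htb r hrpos
      have hSne : S.Nonempty := by
        obtain ⟨y, hy, -⟩ := Set.mem_iUnion₂.mp (hScov (Set.mem_univ x₀))
        exact ⟨y, hy⟩
      obtain ⟨y₀, hy₀S, hy₀min⟩ :=
        Set.exists_min_image S (fun y => μ (qball d y r)) hSfin hSne
      set m₀ := μ (qball d y₀ r) with hm₀def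
      have hm₀pos : 0 < m₀ := hposB y₀ r hrpos
      have hm₀fin : m₀ < ⊤ := hfinB y₀ r hrpos
      have hkey : ∀ x : X, m₀ ≤ μ (qball d x δ) := by
        intro x
        obtain ⟨y, hyS, hyx⟩ := Set.mem_iUnion₂.mp (hScov (Set.mem_univ x))
        have hyx : d y x < r := hyx
        have hsub : qball d y r ⊆ qball d x δ := by
          intro z hz
          have hz : d y z < r := hz
          have h1 : d x y < Csym * r :=
            lt_of_le_of_lt (hsym y x) (mul_lt_mul_of_pos_left hyx hCs0)
          have h2 : d y z < Csym * r :=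
            lt_of_lt_of_le hz (le_mul_of_one_le_left hrpos.le hCsym)
          have h3 : max (d x y) (d y z) < Csym * r := max_lt h1 h2
          have h4 : Cd * (Csym * r) = δ := by
            rw [← mul_assoc, hrdef, mul_div_cancel₀ _ hCdCs.ne']
          calc d x z ≤ Cd * max (d x y) (d y z) := htri x z y
            _ < Cd * (Csym * r) := mul_lt_mul_of_pos_left h3 hCd0
            _ = δ := h4
        exact le_trans (hy₀min y hyS) (measure_mono hsub)
      refine ⟨max 1 ((μ Set.univ / m₀).toReal), le_max_left _ _, fun x => ?_⟩
      have hdivfin : μ Set.univ / m₀ ≠ ⊤ :=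
        (ENNReal.div_lt_top hμfin.ne hm₀pos.ne').ne
      have hCge : μ Set.univ / m₀ ≤ ENNReal.ofReal (max 1 ((μ Set.univ / m₀).toReal)) := by
        conv_lhs => rw [← ENNReal.ofReal_toReal hdivfin]
        exact ENNReal.ofReal_le_ofReal (le_max_right _ _)
      calc μ (qball d x (c * δ)) ≤ μ Set.univ := measure_mono (Set.subset_univ _)
        _ = (μ Set.univ / m₀) * m₀ := (ENNReal.div_mul_cancel hm₀pos.ne' hm₀fin.ne).symm
        _ ≤ ENNReal.ofReal (max 1 ((μ Set.univ / m₀).toReal)) * μ (qball d x δ) :=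
            mul_le_mul' hCge (hkey x)
    · -- bounded + doubling → totally bounded
      rintro ⟨hdiam, hdoub⟩ r hr
      classical
      by_contra hcon
      push_neg at hcon
      have key : ∀ F : Finset X, ∃ x : X, ∀ y ∈ F, r ≤ d y x := by
        intro F
        have hnsub := hcon ↑F F.finite_toSet
        obtain ⟨x, -, hx⟩ := Set.not_subset.mp hnsub
        refine ⟨x, fun y hy => ?_⟩
        by_contra hlt
        push_neg at hlt
        exact hx (Set.mem_iUnion₂.mpr ⟨y, hy, hlt⟩)
      choose pick hpick using key
      set L : ℕ → Finset X := fun n => Nat.rec ∅ (fun _ F => insert (pick F) F) n with hL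
      set f : ℕ → X := fun n => pick (L n) with hf
      have hmemL : ∀ i j, i < j → f i ∈ L j := by
        intro i j hij
        induction j with
        | zero => omega
        | succ j ih =>
          rcases Nat.lt_succ_iff_lt_or_eq.mp hij with h | h
          · exact Finset.mem_insert_of_mem (ih h)
          · subst h; exact Finset.mem_insert_self _ _
      have hsep : ∀ i j, i < j → r ≤ d (f i) (f j) :=
        fun i j h => hpick (L j) (f i) (hmemL i j h)
      have hCd0 : (0:ℝ) < Cd := lt_of_lt_of_le one_pos hCd
      have hCs0 : (0:ℝ) < Csym := lt_of_lt_of_le one_pos hCsym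
      have hCdCs : (0:ℝ) < Cd * Csym := mul_pos hCd0 hCs0
      set s := r / (Cd * Csym) with hsdef
      have hspos : 0 < s := div_pos hr hCdCs
      -- disjointness
      have hdisj : ∀ i j : ℕ, i ≠ j → Disjoint (qball d (f i) s) (qball d (f j) s) := by
        have base : ∀ i j : ℕ, i < j → Disjoint (qball d (f i) s) (qball d (f j) s) := by
          intro i j hij
          rw [Set.disjoint_left]
          intro z hzi hzj
          have hzi : d (f i) z < s := hzi
          have hzj : d (f j) z < s := hzj
          have h1 : d (f i) z < Csym * s :=
            lt_of_lt_of_le hzi (le_mul_of_one_le_left hspos.le hCsym)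
          have h2 : d z (f j) < Csym * s :=
            lt_of_le_of_lt (hsym (f j) z) (mul_lt_mul_of_pos_left hzj hCs0)
          have h4 : Cd * (Csym * s) = r := by
            rw [← mul_assoc, hsdef, mul_div_cancel₀ _ hCdCs.ne']
          have : d (f i) (f j) < r := by
            calc d (f i) (f j) ≤ Cd * max (d (f i) z) (d z (f j)) := htri _ _ _
              _ < Cd * (Csym * s) := mul_lt_mul_of_pos_left (max_lt h1 h2) hCd0
              _ = r := h4
          exact absurd (hsep i j hij) (not_le.mpr this)
        intro i j hij
        rcases lt_or_gt_of_ne hij with h | h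
        · exact base i j h
        · exact (base j i h).symm
      -- find k with qdiam < ofReal (c^k * s)
      have hc0 : (0:ℝ) < c := lt_trans one_pos hc
      have hex : ∃ k : ℕ, qdiam d < ENNReal.ofReal (c ^ k * s) := by
        obtain ⟨k, hk⟩ := pow_unbounded_of_one_lt ((qdiam d).toReal / s) hc
        refine ⟨k, ?_⟩
        have h1 : (qdiam d).toReal < c ^ k * s := by
          rw [div_lt_iff₀ hspos] at hk
          linarith
        calc qdiam d = ENNReal.ofReal (qdiam d).toReal :=
              (ENNReal.ofReal_toReal hdiam.ne).symm
          _ < ENNReal.ofReal (c ^ k * s) :=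
              (ENNReal.ofReal_lt_ofReal_iff (lt_of_le_of_lt ENNReal.toReal_nonneg h1)).mpr h1
      set k := Nat.find hex with hkdef
      have hkspec : qdiam d < ENNReal.ofReal (c ^ k * s) := Nat.find_spec hex
      have hkmin : ∀ j, j < k → ENNReal.ofReal (c ^ j * s) ≤ qdiam d := by
        intro j hj
        exact not_lt.mp (Nat.find_min hex hj)
      -- doubling constants for each scale
      have hCall : ∀ j : ℕ, ∃ C : ℝ, 1 ≤ C ∧ (j < k → ∀ x,
          μ (qball d x (c * (c ^ j * s))) ≤ ENNReal.ofReal C * μ (qball d x (c ^ j * s))) := by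
        intro j
        by_cases hj : j < k
        · obtain ⟨C, hC1, hC2⟩ := hdoub (c ^ j * s) (mul_pos (pow_pos hc0 j) hspos) (hkmin j hj)
          exact ⟨C, hC1, fun _ => hC2⟩
        · exact ⟨1, le_refl 1, fun h => absurd h hj⟩
      choose Cf hCf1 hCf2 using hCall
      -- iterated doubling
      have hiter : ∀ n, n ≤ k → ∀ x, μ (qball d x (c ^ n * s)) ≤
          (∏ j ∈ Finset.range n, ENNReal.ofReal (Cf j)) * μ (qball d x s) := by
        intro n
        induction n with
        | zero => intro _ x; simp
        | succ n ih =>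
          intro hn x
          have hn' : n < k := hn
          have h1 : c ^ (n + 1) * s = c * (c ^ n * s) := by ring
          calc μ (qball d x (c ^ (n+1) * s)) = μ (qball d x (c * (c ^ n * s))) := by rw [h1]
            _ ≤ ENNReal.ofReal (Cf n) * μ (qball d x (c ^ n * s)) := hCf2 n hn' x
            _ ≤ ENNReal.ofReal (Cf n) *
                ((∏ j ∈ Finset.range n, ENNReal.ofReal (Cf j)) * μ (qball d x s)) :=
                mul_le_mul' le_rfl (ih hn'.le x)
            _ = (∏ j ∈ Finset.range (n+1), ENNReal.ofReal (Cf j)) * μ (qball d x s) := by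
                rw [Finset.prod_range_succ, mul_comm (∏ j ∈ Finset.range n, ENNReal.ofReal (Cf j))
                  (ENNReal.ofReal (Cf n)), mul_assoc]
      set Pk := ∏ j ∈ Finset.range k, ENNReal.ofReal (Cf j) with hPkdef
      have hPkfin : Pk ≠ ⊤ := by
        refine (ENNReal.prod_lt_top fun j _ => ENNReal.ofReal_lt_top).ne
      have hPkpos : Pk ≠ 0 := by
        refine Finset.prod_ne_zero_iff.mpr fun j _ => ?_
        simp only [ne_eq, ENNReal.ofReal_eq_zero, not_le]
        exact lt_of_lt_of_le one_pos (hCf1 j)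
      -- big ball is everything
      have hball_univ : ∀ x : X, qball d x (c ^ k * s) = Set.univ := by
        intro x
        refine Set.eq_univ_of_forall fun y => ?_
        have h1 : ENNReal.ofReal (d x y) ≤ qdiam d :=
          le_trans (le_iSup (fun z => ENNReal.ofReal (d x z)) y)
            (le_iSup (fun a => ⨆ z, ENNReal.ofReal (d a z)) x)
        have h2 : ENNReal.ofReal (d x y) < ENNReal.ofReal (c ^ k * s) :=
          lt_of_le_of_lt h1 hkspec
        have hcks : 0 < c ^ k * s := mul_pos (pow_pos hc0 k) hspos
        exact (ENNReal.ofReal_lt_ofReal_iff hcks).mp h2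
      have hμuniv_fin : μ Set.univ < ⊤ := by
        rw [← hball_univ x₀]
        exact hfinB x₀ _ (mul_pos (pow_pos hc0 k) hspos)
      have hμuniv_pos : 0 < μ Set.univ := by
        rw [← hball_univ x₀]
        exact hposB x₀ _ (mul_pos (pow_pos hc0 k) hspos)
      -- uniform lower bound
      set m₁ := μ Set.univ / Pk with hm₁def
      have hm₁pos : m₁ ≠ 0 :=
        (ENNReal.div_pos hμuniv_pos.ne' hPkfin).ne'
      have hlow : ∀ x : X, m₁ ≤ μ (qball d x s) := by
        intro x
        rw [hm₁def, ENNReal.div_le_iff_le_mul (Or.inl hPkpos) (Or.inl hPkfin)]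
        calc μ Set.univ = μ (qball d x (c ^ k * s)) := by rw [hball_univ x]
          _ ≤ Pk * μ (qball d x s) := hiter k le_rfl x
          _ = μ (qball d x s) * Pk := mul_comm _ _
      -- contradiction via disjoint balls
      obtain ⟨n, hn⟩ := ENNReal.exists_nat_mul_gt hm₁pos hμuniv_fin.ne
      have hfinal : (n : ℝ≥0∞) * m₁ ≤ μ Set.univ := by
        have hpd : Set.PairwiseDisjoint ↑(Finset.range n) (fun i => qball d (f i) s) :=
          fun i _ j _ hij => hdisj i j hij
        have hmeas : ∀ i ∈ Finset.range n, MeasurableSet (qball d (f i) s) :=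
          fun i _ => hmeasB (f i) s hspos
        have h1 : ∑ i ∈ Finset.range n, μ (qball d (f i) s) =
            μ (⋃ i ∈ Finset.range n, qball d (f i) s) :=
          (measure_biUnion_finset hpd hmeas).symm
        calc (n : ℝ≥0∞) * m₁ = ∑ _i ∈ Finset.range n, m₁ := by
              rw [Finset.sum_const, Finset.card_range, nsmul_eq_mul]
          _ ≤ ∑ i ∈ Finset.range n, μ (qball d (f i) s) :=
              Finset.sum_le_sum fun i _ => hlow (f i)
          _ = μ (⋃ i ∈ Finset.range n, qball d (f i) s) := h1
          _ ≤ μ Set.univ := measure_mono (Set.subset_univ _)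
      exact absurd hfinal (not_le.mpr hn)
end

section
/- Let (X,d,μ) be a quasi-metric-measure space. If (X,d) is totally bounded, then μ is integrable, i.e., there is a quasi-metric ρ equivalent to d such that for each fixed r > 0 the map x ↦ μ(B_ρ(x,r)) is measurable and ∫_X 1/μ(B_ρ(x,r)) dμ(x) < ∞. -/
open Set MeasureTheory Topology
open scoped ENNReal NNReal

variable {X : Type*}

/-- `μ` is an integrable measure: there is a quasi-metric `ρ` equivalent to
`d` such that for every `r > 0` the map `x ↦ μ(B_ρ(x,r))` is measurable and
`∫_X 1/μ(B_ρ(x,r)) dμ(x) < ∞`. -/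
def IntegrableQMeasure [MeasurableSpace X] (d : X → X → ℝ)
    (μ : MeasureTheory.Measure X) : Prop :=
  ∃ ρ : X → X → ℝ,
    (∀ x y, 0 ≤ ρ x y) ∧ (∀ x y, ρ x y = 0 ↔ x = y) ∧
    (∃ C₀ : ℝ, 1 ≤ C₀ ∧ ∀ x y, ρ y x ≤ C₀ * ρ x y) ∧
    (∃ C₁ : ℝ, 1 ≤ C₁ ∧ ∀ x y z, ρ x y ≤ C₁ * max (ρ x z) (ρ z y)) ∧
    (∃ κ : ℝ, 0 < κ ∧ ∀ x y, κ⁻¹ * ρ x y ≤ d x y ∧ d x y ≤ κ * ρ x y) ∧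
    ∀ r : ℝ, 0 < r →
      Measurable (fun x => μ (qball ρ x r)) ∧
      (∫⁻ x, (μ (qball ρ x r))⁻¹ ∂μ) < ⊤

/-- on a quasi-metric-measure space, total boundedness of `(X,d)`
implies that `μ` is integrable. -/
theorem totallyBounded_integrableQMeasure (d : X → X → ℝ)
    [m : MeasurableSpace X]
    (hnn : ∀ x y, 0 ≤ d x y)
    (heq : ∀ x y, d x y = 0 ↔ x = y)
    (Csym : ℝ) (hCsym : 1 ≤ Csym) (hsym : ∀ x y, d y x ≤ Csym * d x y)
    (Cd : ℝ) (hCd : 1 ≤ Cd) (htri : ∀ x y z, d x y ≤ Cd * max (d x z) (d z y))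
    (hborel : ∀ s : Set X, IsOpen[quasiMetricTopology d] s → MeasurableSet s)
    (μ : Measure X)
    (hmeasB : ∀ (x : X) (r : ℝ), 0 < r → MeasurableSet (qball d x r))
    (hposB : ∀ (x : X) (r : ℝ), 0 < r → 0 < μ (qball d x r))
    (hfinB : ∀ (x : X) (r : ℝ), 0 < r → μ (qball d x r) < ⊤)
    (hTB : ∀ r : ℝ, 0 < r → ∃ T : Set X, T.Finite ∧ Set.univ ⊆ ⋃ y ∈ T, qball d y r) :
    IntegrableQMeasure d μ := by
  have hCd0 : (0:ℝ) < Cd := lt_of_lt_of_le one_pos hCd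
  have hCs0 : (0:ℝ) < Csym := lt_of_lt_of_le one_pos hCsym
  -- μ is a finite measure
  have hfin : μ Set.univ < ⊤ := by
    obtain ⟨T, hTfin, hcov⟩ := hTB 1 one_pos
    calc μ Set.univ ≤ μ (⋃ y ∈ T, qball d y 1) := measure_mono hcov
      _ < ⊤ := measure_biUnion_lt_top hTfin fun y _ => hfinB y 1 one_pos
  haveI : IsFiniteMeasure μ := ⟨hfin⟩
  rcases isEmpty_or_nonempty X with hX | hX
  · refine ⟨d, hnn, heq, ⟨Csym, hCsym, hsym⟩, ⟨Cd, hCd, htri⟩,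
      ⟨1, one_pos, fun x => isEmptyElim x⟩, ?_⟩
    intro r hr
    refine ⟨measurable_of_empty _, ?_⟩
    simp [Measure.eq_zero_of_isEmpty μ]
  obtain ⟨x₀⟩ := hX
  -- countable "dense" family
  have hTB' : ∀ k : ℕ, ∃ T : Set X, T.Finite ∧
      Set.univ ⊆ ⋃ y ∈ T, qball d y (1/((k:ℝ)+1)) := fun k => hTB _ (by positivity)
  choose S hSfin hScov using hTB'
  have hTcount : (⋃ k, S k).Countable := countable_iUnion fun k => (hSfin k).countable
  have hTne : (⋃ k, S k).Nonempty := by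
    obtain ⟨u, hu⟩ := mem_iUnion₂.mp (hScov 0 (mem_univ x₀))
    exact ⟨u, mem_iUnion.mpr ⟨0, hu.1⟩⟩
  obtain ⟨t, ht⟩ := Set.Countable.exists_eq_range hTcount hTne
  have hdense : ∀ (x : X) (ε : ℝ), 0 < ε → ∃ n, d (t n) x < ε := by
    intro x ε hε
    obtain ⟨k, hk⟩ := exists_nat_gt (1/ε)
    have h1 : 1/((k:ℝ)+1) < ε := by
      rw [div_lt_iff₀ (by positivity)]
      have h2 : 1/ε < (k:ℝ) + 1 := lt_trans hk (by linarith)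
      rw [div_lt_iff₀ hε] at h2
      linarith [h2]
    obtain ⟨y, hyS, hyx⟩ := mem_iUnion₂.mp (hScov k (mem_univ x))
    have : y ∈ Set.range t := ht ▸ mem_iUnion.mpr ⟨k, hyS⟩
    obtain ⟨n, rfl⟩ := this
    exact ⟨n, lt_trans hyx h1⟩
  -- the regularized quasi-metric
  set ρ : X → X → ℝ := fun x y => ⨅ n, (d (t n) x + d (t n) y) with hρ
  have hbdd : ∀ x y, BddBelow (Set.range fun n => d (t n) x + d (t n) y) :=
    fun x y => ⟨0, by rintro _ ⟨n, rfl⟩; exact add_nonneg (hnn _ _) (hnn _ _)⟩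
  have hρnn : ∀ x y, 0 ≤ ρ x y :=
    fun x y => le_ciInf fun n => add_nonneg (hnn _ _) (hnn _ _)
  set κ : ℝ := Cd * Csym with hκdef
  have hκ0 : 0 < κ := mul_pos hCd0 hCs0
  have hupper : ∀ x y, d x y ≤ κ * ρ x y := by
    intro x y
    have h : ∀ n, d x y / κ ≤ d (t n) x + d (t n) y := by
      intro n
      have h1 : d x y ≤ Cd * max (d x (t n)) (d (t n) y) := htri x y (t n)
      have h2 : d x (t n) ≤ Csym * d (t n) x := hsym (t n) x
      have h3 : max (d x (t n)) (d (t n) y) ≤ Csym * d (t n) x + d (t n) y :=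
        max_le (by linarith [hnn (t n) y]) (by nlinarith [hnn (t n) x, hnn (t n) y])
      have h5 := mul_le_mul_of_nonneg_left h3 hCd0.le
      have h6 : Cd * d (t n) y ≤ Cd * Csym * d (t n) y := by
        nlinarith [mul_nonneg (mul_nonneg hCd0.le (sub_nonneg.mpr hCsym)) (hnn (t n) y)]
      have h4 : d x y ≤ κ * (d (t n) x + d (t n) y) := by
        rw [hκdef]
        nlinarith [h1, h5, h6]
      rw [div_le_iff₀ hκ0]
      linarith [h4]
    have := le_ciInf h
    rw [div_le_iff₀ hκ0] at this
    linarith [this]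
  have hlower : ∀ x y, ρ x y ≤ Cd * d x y := by
    intro x y
    refine le_of_forall_pos_le_add fun ε hε => ?_
    obtain ⟨n, hn⟩ := hdense x (ε / (1 + Cd)) (by positivity)
    have h1 : ρ x y ≤ d (t n) x + d (t n) y := ciInf_le (hbdd x y) n
    have h2 : d (t n) y ≤ Cd * max (d (t n) x) (d x y) := htri (t n) y x
    have h3 : max (d (t n) x) (d x y) ≤ d (t n) x + d x y :=
      max_le (by linarith [hnn x y]) (by linarith [hnn (t n) x])
    have h5 := mul_le_mul_of_nonneg_left h3 hCd0.le
    have h7 : d (t n) x * (1 + Cd) < ε := (lt_div_iff₀ (by positivity)).mp hn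
    nlinarith [hnn (t n) x, hnn x y]
  refine ⟨ρ, hρnn, ?_, ⟨1, le_refl 1, ?_⟩, ⟨Cd * Cd * κ, ?_, ?_⟩, ⟨κ, hκ0, ?_⟩, ?_⟩
  · -- ρ x y = 0 ↔ x = y
    intro x y
    constructor
    · intro h
      have := hupper x y
      rw [h, mul_zero] at this
      exact (heq x y).mp (le_antisymm this (hnn x y))
    · rintro rfl
      refine le_antisymm ?_ (hρnn x x)
      have := hlower x x
      rw [(heq x x).mpr rfl, mul_zero] at this
      exact this
  · -- symmetry with C₀ = 1
    intro x y
    have : ρ y x = ρ x y := by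
      simp only [hρ]
      exact congrArg _ (funext fun n => add_comm _ _)
    rw [this, one_mul]
  · -- 1 ≤ C₁
    have : (1:ℝ) ≤ Cd * Cd := one_le_mul_of_one_le_of_one_le hCd hCd
    nlinarith
  · -- quasi-triangle for ρ
    intro x y z
    have h1 : ρ x y ≤ Cd * d x y := hlower x y
    have h2 : d x y ≤ Cd * max (d x z) (d z y) := htri x y z
    have h3 : max (d x z) (d z y) ≤ κ * max (ρ x z) (ρ z y) := by
      refine max_le ?_ ?_
      · exact le_trans (hupper x z)
          (mul_le_mul_of_nonneg_left (le_max_left _ _) hκ0.le)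
      · exact le_trans (hupper z y)
          (mul_le_mul_of_nonneg_left (le_max_right _ _) hκ0.le)
    have hmaxnn : 0 ≤ max (ρ x z) (ρ z y) := le_trans (hρnn x z) (le_max_left _ _)
    calc ρ x y ≤ Cd * d x y := h1
      _ ≤ Cd * (Cd * max (d x z) (d z y)) := by nlinarith
      _ ≤ Cd * (Cd * (κ * max (ρ x z) (ρ z y))) :=
            mul_le_mul_of_nonneg_left (mul_le_mul_of_nonneg_left h3 hCd0.le) hCd0.le
      _ = Cd * Cd * κ * max (ρ x z) (ρ z y) := by ring
  · -- equivalence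
    intro x y
    constructor
    · have h1 : ρ x y ≤ κ * d x y := by
        have := hlower x y
        have : Cd * d x y ≤ κ * d x y := by
          rw [hκdef]
          nlinarith [mul_nonneg (mul_nonneg hCd0.le (sub_nonneg.mpr hCsym)) (hnn x y)]
        linarith [hlower x y]
      calc κ⁻¹ * ρ x y ≤ κ⁻¹ * (κ * d x y) :=
            mul_le_mul_of_nonneg_left h1 (inv_nonneg.mpr hκ0.le)
        _ = d x y := by field_simp
    · exact hupper x y
  · -- for each r > 0 : measurability and finite integral
    intro r hr
    have hdmeas : ∀ u : X, Measurable fun x => d u x := by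
      intro u
      apply measurable_of_Iio
      intro s
      rcases le_or_gt s 0 with hs | hs
      · have : (fun x => d u x) ⁻¹' Iio s = ∅ := by
          ext x
          simp only [mem_preimage, mem_Iio, mem_empty_iff_false, iff_false, not_lt]
          linarith [hnn u x]
        rw [this]; exact MeasurableSet.empty
      · exact hmeasB u s hs
    constructor
    · -- measurability
      have hprod : MeasurableSet {p : X × X | ρ p.1 p.2 < r} := by
        have hrw : {p : X × X | ρ p.1 p.2 < r}
            = ⋃ n, {p : X × X | d (t n) p.1 + d (t n) p.2 < r} := by
          ext p
          simp only [mem_setOf_eq, mem_iUnion]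
          exact ciInf_lt_iff (hbdd _ _)
        rw [hrw]
        refine MeasurableSet.iUnion fun n => ?_
        exact measurableSet_lt
          (((hdmeas (t n)).comp measurable_fst).add ((hdmeas (t n)).comp measurable_snd))
          measurable_const
      have : (fun x => μ (qball ρ x r))
          = fun x => μ (Prod.mk x ⁻¹' {p : X × X | ρ p.1 p.2 < r}) := rfl
      rw [this]
      exact measurable_measure_prodMk_left hprod
    · -- finite integral
      set s : ℝ := r / (Cd * Cd * Csym + 1) with hsdef
      have hs : 0 < s := by positivity
      obtain ⟨T', hT'fin, hT'cov⟩ := hTB s hs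
      have hFne : (hT'fin.toFinset).Nonempty := by
        obtain ⟨y, hyT, _⟩ := mem_iUnion₂.mp (hT'cov (mem_univ x₀))
        exact ⟨y, hT'fin.mem_toFinset.mpr hyT⟩
      obtain ⟨y₀, hy₀F, hy₀min⟩ :=
        Finset.exists_min_image _ (fun y => μ (qball d y s)) hFne
      set c : ℝ≥0∞ := μ (qball d y₀ s) with hcdef
      have hc0 : 0 < c := hposB y₀ s hs
      have hcb : ∀ x : X, c ≤ μ (qball ρ x r) := by
        intro x
        obtain ⟨y, hyT, hyx⟩ := mem_iUnion₂.mp (hT'cov (mem_univ x))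
        have hsub : qball d y s ⊆ qball ρ x r := by
          intro z hz
          have hz' : d y z < s := hz
          have hyx' : d y x < s := hyx
          have h1 : d x y ≤ Csym * d y x := hsym y x
          have hmax : max (d x y) (d y z) < Csym * s := by
            refine max_lt (lt_of_le_of_lt h1 ?_) (lt_of_lt_of_le hz' ?_)
            · exact (mul_lt_mul_iff_right₀ hCs0).mpr hyx'
            · exact le_mul_of_one_le_left hs.le hCsym
          have h2 : d x z ≤ Cd * max (d x y) (d y z) := htri x z y
          have h3 : d x z < Cd * (Csym * s) :=
            lt_of_le_of_lt h2 ((mul_lt_mul_iff_right₀ hCd0).mpr hmax)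
          have h4 : ρ x z ≤ Cd * d x z := hlower x z
          have hsr : s * (Cd * Cd * Csym + 1) = r := by
            rw [hsdef]; field_simp
          show ρ x z < r
          nlinarith [mul_lt_mul_of_pos_left h3 hCd0]
        calc c ≤ μ (qball d y s) := hy₀min y (hT'fin.mem_toFinset.mpr hyT)
          _ ≤ μ (qball ρ x r) := measure_mono hsub
      calc (∫⁻ x, (μ (qball ρ x r))⁻¹ ∂μ) ≤ ∫⁻ _x, c⁻¹ ∂μ :=
            lintegral_mono fun x => ENNReal.inv_le_inv' (hcb x)
        _ = c⁻¹ * μ Set.univ := lintegral_const _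
        _ < ⊤ := ENNReal.mul_lt_top (ENNReal.inv_lt_top.mpr hc0) hfin
end

section
/- Let (X,d,μ) be an unbounded quasi-metric-measure space such that μ is (C_d,δ)-doubling for some fixed δ > 0, where C_d is the quasi-subadditivity constant of d, and suppose the mapping x ↦ μ(B_d(x,δ)) is measurable. Then ∫_X 1/μ(B_d(x,δ)) dμ(x) = ∞; consequently μ is not integrable. -/
open Set MeasureTheory Topology
open scoped ENNReal NNReal

variable {X : Type*}

/-- on an unbounded quasi-metric-measure space, if `μ` is
`(C_d,δ)`-doubling for some fixed `δ > 0` and `x ↦ μ(B_d(x,δ))` is measurable,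
then `∫_X 1/μ(B_d(x,δ)) dμ = ∞`; consequently `μ` is not integrable. -/
theorem unbounded_doubling_not_integrable (d : X → X → ℝ)
    [m : MeasurableSpace X]
    (hnn : ∀ x y, 0 ≤ d x y)
    (heq : ∀ x y, d x y = 0 ↔ x = y)
    (Csym : ℝ) (hCsym : 1 ≤ Csym) (hsym : ∀ x y, d y x ≤ Csym * d x y)
    (Cd : ℝ) (hCd : 1 ≤ Cd) (htri : ∀ x y z, d x y ≤ Cd * max (d x z) (d z y))
    (hborel : ∀ s : Set X, IsOpen[quasiMetricTopology d] s → MeasurableSet s)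
    (μ : Measure X)
    (hmeasB : ∀ (x : X) (r : ℝ), 0 < r → MeasurableSet (qball d x r))
    (hposB : ∀ (x : X) (r : ℝ), 0 < r → 0 < μ (qball d x r))
    (hfinB : ∀ (x : X) (r : ℝ), 0 < r → μ (qball d x r) < ⊤)
    (hunb : ∀ D : ℝ, ∃ x y : X, D < d x y)
    (δ : ℝ) (hδ : 0 < δ)
    (Δ : ℝ) (hΔ : 1 ≤ Δ)
    (hdoub : ∀ x : X, μ (qball d x (Cd * δ)) ≤ ENNReal.ofReal Δ * μ (qball d x δ))
    (hmeasmap : Measurable fun x => μ (qball d x δ)) :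
    (∫⁻ x, (μ (qball d x δ))⁻¹ ∂μ) = ⊤ ∧ ¬ IntegrableQMeasure d μ := by
  have hCd0 : (0:ℝ) < Cd := lt_of_lt_of_le one_pos hCd
  have hCs0 : (0:ℝ) < Csym := lt_of_lt_of_le one_pos hCsym
  set f : X → ℝ≥0∞ := fun x => (μ (qball d x δ))⁻¹ with hf
  set Δ' : ℝ≥0∞ := ENNReal.ofReal Δ with hΔ'
  have hΔ'ne : Δ' ≠ 0 := by
    simp only [hΔ', ne_eq, ENNReal.ofReal_eq_zero, not_le]
    linarith
  have hΔ'top : Δ' ≠ ⊤ := ENNReal.ofReal_ne_top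
  -- a basepoint
  obtain ⟨p, _q, _hpq⟩ := hunb 0
  -- far points from p
  have hfar : ∀ D : ℝ, ∃ z : X, D < d p z := by
    intro D
    set M : ℝ := max D 0 + 1 with hM
    have hM1 : (1:ℝ) ≤ M := by have := le_max_right D 0; linarith
    have hDM : D < M := lt_of_le_of_lt (le_max_left D 0) (by linarith)
    obtain ⟨x, y, hxy⟩ := hunb (Cd * (Csym * M))
    have h1 : Cd * (Csym * M) < Cd * max (d x p) (d p y) :=
      lt_of_lt_of_le hxy (htri x y p)
    have h2 : Csym * M < max (d x p) (d p y) := lt_of_mul_lt_mul_left h1 (le_of_lt hCd0)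
    rcases le_total (d x p) (d p y) with hc | hc
    · refine ⟨y, ?_⟩
      have : Csym * M < d p y := by rwa [max_eq_right hc] at h2
      nlinarith
    · refine ⟨x, ?_⟩
      have h3 : Csym * M < d x p := by rwa [max_eq_left hc] at h2
      have h4 : d x p ≤ Csym * d p x := hsym p x
      nlinarith
  -- each δ-ball contributes at least Δ'⁻¹
  have hA : ∀ z : X, Δ'⁻¹ ≤ ∫⁻ x in qball d z δ, f x ∂μ := by
    intro z
    set s := qball d z δ with hs
    have hsm : MeasurableSet s := hmeasB z δ hδ
    have hspos : 0 < μ s := hposB z δ hδ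
    have hsfin : μ s < ⊤ := hfinB z δ hδ
    have hpt : ∀ x ∈ s, (Δ' * μ s)⁻¹ ≤ f x := by
      intro x hx
      have hsub : qball d x δ ⊆ qball d z (Cd * δ) := by
        intro y hy
        have h1 : d z y ≤ Cd * max (d z x) (d x y) := htri z y x
        have h2 : max (d z x) (d x y) < δ := max_lt hx hy
        calc d z y ≤ Cd * max (d z x) (d x y) := h1
          _ < Cd * δ := by exact mul_lt_mul_of_pos_left h2 hCd0
      have hle : μ (qball d x δ) ≤ Δ' * μ s :=
        le_trans (measure_mono hsub) (hdoub z)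
      exact ENNReal.inv_le_inv.mpr hle
    calc Δ'⁻¹ = (Δ' * μ s)⁻¹ * μ s := by
          rw [ENNReal.mul_inv (Or.inl hΔ'ne) (Or.inl hΔ'top), mul_assoc,
            ENNReal.inv_mul_cancel (ne_of_gt hspos) (ne_of_lt hsfin), mul_one]
      _ = ∫⁻ _x in s, (Δ' * μ s)⁻¹ ∂μ := by rw [setLIntegral_const]
      _ ≤ ∫⁻ x in s, f x ∂μ := setLIntegral_mono' hsm hpt
  -- by induction, arbitrarily large mass inside big balls around p
  have hB : ∀ n : ℕ, ∃ R : ℝ, 0 < R ∧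
      (n : ℝ≥0∞) * Δ'⁻¹ ≤ ∫⁻ x in qball d p R, f x ∂μ := by
    intro n
    induction n with
    | zero => exact ⟨1, one_pos, by simp⟩
    | succ n ih =>
      obtain ⟨R, hR0, hR⟩ := ih
      obtain ⟨z, hz⟩ := hfar (Cd * max R (Csym * δ))
      have hz0 : 0 < d p z := by
        have : (0:ℝ) < Cd * max R (Csym * δ) := by positivity
        linarith
      set R' : ℝ := Cd * (d p z + δ) with hR'
      have hR'0 : 0 < R' := by positivity
      -- B(p,R) ⊆ B(p,R')
      have hsub1 : qball d p R ⊆ qball d p R' := by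
        intro w hw
        have h1 : R ≤ Cd * max R (Csym * δ) :=
          le_trans (le_max_left _ _) (le_mul_of_one_le_left (le_max_of_le_left (le_of_lt hR0)) hCd)
        have h2 : d p z ≤ R' := by nlinarith
        have hw' : d p w < R := hw
        show d p w < R'
        linarith
      -- B(z,δ) ⊆ B(p,R')
      have hsub2 : qball d z δ ⊆ qball d p R' := by
        intro w hw
        have h1 : d p w ≤ Cd * max (d p z) (d z w) := htri p w z
        have h2 : max (d p z) (d z w) < d p z + δ :=
          max_lt (by linarith) (by linarith [hnn p z, show d z w < δ from hw])
        exact lt_of_le_of_lt h1 (mul_lt_mul_of_pos_left h2 hCd0)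
      -- disjointness
      have hdisj : Disjoint (qball d p R) (qball d z δ) := by
        rw [Set.disjoint_left]
        intro w hw1 hw2
        have h1 : d p z ≤ Cd * max (d p w) (d w z) := htri p z w
        have h2 : d w z ≤ Csym * d z w := hsym z w
        have h3 : max (d p w) (d w z) < max R (Csym * δ) := by
          rw [max_lt_iff]
          constructor
          · exact lt_of_lt_of_le hw1 (le_max_left _ _)
          · refine lt_of_le_of_lt h2 (lt_of_lt_of_le ?_ (le_max_right _ _))
            exact mul_lt_mul_of_pos_left hw2 hCs0
        have h4 : d p z < Cd * max R (Csym * δ) :=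
          lt_of_le_of_lt h1 (mul_lt_mul_of_pos_left h3 hCd0)
        linarith
      refine ⟨R', hR'0, ?_⟩
      have hcast : ((n + 1 : ℕ) : ℝ≥0∞) * Δ'⁻¹ = (n : ℝ≥0∞) * Δ'⁻¹ + Δ'⁻¹ := by
        push_cast
        ring
      rw [hcast]
      calc (n : ℝ≥0∞) * Δ'⁻¹ + Δ'⁻¹
          ≤ (∫⁻ x in qball d p R, f x ∂μ) + ∫⁻ x in qball d z δ, f x ∂μ :=
            add_le_add hR (hA z)
        _ = ∫⁻ x in qball d p R ∪ qball d z δ, f x ∂μ :=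
            (lintegral_union (hmeasB z δ hδ) hdisj).symm
        _ ≤ ∫⁻ x in qball d p R', f x ∂μ :=
            lintegral_mono_set (Set.union_subset hsub1 hsub2)
  -- conclusion part 1
  have htop : (∫⁻ x, f x ∂μ) = ⊤ := by
    by_contra hne
    obtain ⟨N, hN⟩ := ENNReal.exists_nat_gt (ENNReal.mul_ne_top hne hΔ'top :
      (∫⁻ x, f x ∂μ) * Δ' ≠ ⊤)
    have h1 : (N : ℝ≥0∞) * Δ'⁻¹ ≤ ∫⁻ x, f x ∂μ := by
      obtain ⟨R, _, hR⟩ := hB N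
      exact le_trans hR (setLIntegral_le_lintegral _ _)
    have h2 : (N : ℝ≥0∞) ≤ (∫⁻ x, f x ∂μ) * Δ' := by
      calc (N : ℝ≥0∞) = (N : ℝ≥0∞) * Δ'⁻¹ * Δ' := by
            rw [mul_assoc, ENNReal.inv_mul_cancel hΔ'ne hΔ'top, mul_one]
        _ ≤ (∫⁻ x, f x ∂μ) * Δ' := mul_le_mul_left h1 Δ'
    exact absurd h2 (not_le.mpr hN)
  refine ⟨htop, ?_⟩
  -- part 2: not integrable
  rintro ⟨ρ, _hρnn, _hρeq, _hρsym, _hρtri, ⟨κ, hκ0, hκ⟩, hint⟩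
  have hr0 : (0:ℝ) < δ / κ := div_pos hδ hκ0
  obtain ⟨_, hfin⟩ := hint (δ / κ) hr0
  have hsub : ∀ x : X, qball ρ x (δ / κ) ⊆ qball d x δ := by
    intro x y hy
    have h1 : d x y ≤ κ * ρ x y := (hκ x y).2
    have h2 : κ * ρ x y < κ * (δ / κ) := mul_lt_mul_of_pos_left hy hκ0
    have h3 : κ * (δ / κ) = δ := by field_simp
    show d x y < δ
    rw [← h3]; exact lt_of_le_of_lt h1 h2
  have hmono : (∫⁻ x, f x ∂μ) ≤ ∫⁻ x, (μ (qball ρ x (δ / κ)))⁻¹ ∂μ := by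
    refine lintegral_mono fun x => ?_
    exact ENNReal.inv_le_inv.mpr (measure_mono (hsub x))
  rw [htop] at hmono
  exact absurd (lt_of_le_of_lt hmono hfin) (lt_irrefl ⊤)
end

section
/- Let μ on [0,∞) (with Euclidean distance) be given by dμ = e^{-1/x^β} dx with β > 0. Then μ is not locally doubling at 0: lim_{x→0⁺} μ(B(0,2x))/μ(B(0,x)) = ∞. However, for every c ∈ (1,∞), δ > 0, and all x ≥ 0, one has μ(B(x,cδ)) ≤ 4c·e^{(2/δ)^β}·μ(B(x,δ)). -/
open Set MeasureTheory Real Filter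
open scoped ENNReal Topology

/-- The measure `dμ = e^{-1/x^β} dx` on `[0,∞)`. -/
noncomputable def muExpInv (β : ℝ) : Measure ℝ :=
  (volume.restrict (Set.Ici (0 : ℝ))).withDensity fun x =>
    ENNReal.ofReal (Real.exp (-(1 / x ^ β)))

lemma muExpInv_dens_meas (β : ℝ) :
    Measurable fun x : ℝ => ENNReal.ofReal (Real.exp (-(1 / x ^ β))) := by
  fun_prop

lemma muExpInv_apply (β : ℝ) {s : Set ℝ} (hs : MeasurableSet s) :
    muExpInv β s = ∫⁻ x in s ∩ Ici 0, ENNReal.ofReal (Real.exp (-(1 / x ^ β))) := by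
  rw [muExpInv, withDensity_apply _ hs, Measure.restrict_restrict hs]

lemma muExpInv_upper (β a b : ℝ) (hβ : 0 < β) :
    muExpInv β (Ioo a b) ≤ ENNReal.ofReal (b - a) := by
  rw [muExpInv_apply β measurableSet_Ioo]
  calc ∫⁻ x in Ioo a b ∩ Ici 0, ENNReal.ofReal (Real.exp (-(1 / x ^ β)))
      ≤ ∫⁻ _ in Ioo a b ∩ Ici 0, 1 := by
        refine setLIntegral_mono measurable_const fun x hx => ?_
        have hx0 : (0:ℝ) ≤ x := hx.2
        have : Real.exp (-(1 / x ^ β)) ≤ 1 := by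
          rw [Real.exp_le_one_iff]
          have : (0:ℝ) ≤ 1 / x ^ β := by positivity
          linarith
        simpa using ENNReal.ofReal_le_ofReal this
    _ = volume (Ioo a b ∩ Ici 0) := setLIntegral_one _
    _ ≤ volume (Ioo a b) := measure_mono inter_subset_left
    _ = ENNReal.ofReal (b - a) := Real.volume_Ioo

lemma muExpInv_lower (β : ℝ) (hβ : 0 < β) {a b : ℝ} (ha : 0 < a) (hab : a ≤ b) :
    ENNReal.ofReal (Real.exp (-(1 / a ^ β)) * (b - a)) ≤ muExpInv β (Ioo a b) := by
  rw [muExpInv_apply β measurableSet_Ioo]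
  have hsub : Ioo a b ∩ Ici 0 = Ioo a b :=
    inter_eq_left.2 fun x hx => le_of_lt (ha.trans hx.1)
  rw [hsub, ENNReal.ofReal_mul (Real.exp_nonneg _)]
  calc ENNReal.ofReal (Real.exp (-(1 / a ^ β))) * ENNReal.ofReal (b - a)
      = ∫⁻ _ in Ioo a b, ENNReal.ofReal (Real.exp (-(1 / a ^ β))) := by
        rw [setLIntegral_const, Real.volume_Ioo]
    _ ≤ ∫⁻ x in Ioo a b, ENNReal.ofReal (Real.exp (-(1 / x ^ β))) := by
        refine setLIntegral_mono (muExpInv_dens_meas β) fun x hx => ?_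
        refine ENNReal.ofReal_le_ofReal (Real.exp_le_exp.2 (neg_le_neg ?_))
        exact one_div_le_one_div_of_le (Real.rpow_pos_of_pos ha β)
          (Real.rpow_le_rpow ha.le hx.1.le hβ.le)

lemma muExpInv_den_upper (β : ℝ) (hβ : 0 < β) {x : ℝ} (hx : 0 < x) :
    muExpInv β (Ioo (-x) x) ≤ ENNReal.ofReal (Real.exp (-(1 / x ^ β)) * x) := by
  rw [muExpInv_apply β measurableSet_Ioo]
  have hsub : Ioo (-x) x ∩ Ici 0 = Ico 0 x := by
    ext t
    simp only [mem_inter_iff, mem_Ioo, mem_Ici, mem_Ico]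
    constructor
    · rintro ⟨⟨_, h2⟩, h3⟩; exact ⟨h3, h2⟩
    · rintro ⟨h1, h2⟩; exact ⟨⟨by linarith, h2⟩, h1⟩
  rw [hsub]
  have hae : ∫⁻ t in Ico 0 x, ENNReal.ofReal (Real.exp (-(1 / t ^ β)))
      = ∫⁻ t in Ioo 0 x, ENNReal.ofReal (Real.exp (-(1 / t ^ β))) :=
    setLIntegral_congr Ioo_ae_eq_Ico.symm
  rw [hae, ENNReal.ofReal_mul (Real.exp_nonneg _)]
  calc ∫⁻ t in Ioo 0 x, ENNReal.ofReal (Real.exp (-(1 / t ^ β)))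
      ≤ ∫⁻ _ in Ioo 0 x, ENNReal.ofReal (Real.exp (-(1 / x ^ β))) := by
        refine setLIntegral_mono measurable_const fun t ht => ?_
        refine ENNReal.ofReal_le_ofReal (Real.exp_le_exp.2 (neg_le_neg ?_))
        exact one_div_le_one_div_of_le (Real.rpow_pos_of_pos ht.1 β)
          (Real.rpow_le_rpow ht.1.le ht.2.le hβ.le)
    _ = ENNReal.ofReal (Real.exp (-(1 / x ^ β))) * ENNReal.ofReal x := by
        rw [setLIntegral_const, Real.volume_Ioo, sub_zero]

lemma part2 (β : ℝ) (hβ : 0 < β) :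
    ∀ c : ℝ, 1 < c → ∀ δ : ℝ, 0 < δ → ∀ x : ℝ, 0 ≤ x →
      muExpInv β (Set.Ioo (x - c * δ) (x + c * δ)) ≤
        ENNReal.ofReal (4 * c * Real.exp ((2 / δ) ^ β)) *
          muExpInv β (Set.Ioo (x - δ) (x + δ)) := by
  intro c hc δ hδ x hx
  set K : ℝ := (2 / δ) ^ β with hK
  have hc0 : (0:ℝ) < c := lt_trans one_pos hc
  -- upper bound on the big ball
  have hup : muExpInv β (Set.Ioo (x - c * δ) (x + c * δ)) ≤ ENNReal.ofReal (2 * (c * δ)) := by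
    have := muExpInv_upper β (x - c * δ) (x + c * δ) hβ
    convert this using 2
    ring
  -- lower bound on the small ball
  have ha : (0:ℝ) < x + δ / 2 := by linarith
  have hlow0 := muExpInv_lower β hβ (a := x + δ / 2) (b := x + δ) ha (by linarith)
  have hmono : muExpInv β (Ioo (x + δ / 2) (x + δ)) ≤ muExpInv β (Ioo (x - δ) (x + δ)) :=
    measure_mono (Ioo_subset_Ioo (by linarith) le_rfl)
  have hexp : Real.exp (-K) * (δ / 2) ≤ Real.exp (-(1 / (x + δ / 2) ^ β)) * ((x + δ) - (x + δ / 2)) := by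
    have h1 : 1 / (x + δ / 2) ^ β ≤ K := by
      have h2 : (1:ℝ) / (δ / 2) ^ β = K := by
        rw [hK, one_div, ← Real.inv_rpow (by positivity)]
        norm_num
      rw [← h2]
      exact one_div_le_one_div_of_le (Real.rpow_pos_of_pos (by positivity) β)
        (Real.rpow_le_rpow (by positivity) (by linarith) hβ.le)
    have := Real.exp_le_exp.2 (neg_le_neg h1)
    nlinarith [Real.exp_pos (-K), this, hδ]
  have hlow : ENNReal.ofReal (Real.exp (-K) * (δ / 2)) ≤ muExpInv β (Ioo (x - δ) (x + δ)) :=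
    le_trans (ENNReal.ofReal_le_ofReal hexp) (le_trans hlow0 hmono)
  -- combine
  calc muExpInv β (Set.Ioo (x - c * δ) (x + c * δ))
      ≤ ENNReal.ofReal (2 * (c * δ)) := hup
    _ = ENNReal.ofReal (4 * c * Real.exp K) * ENNReal.ofReal (Real.exp (-K) * (δ / 2)) := by
        rw [← ENNReal.ofReal_mul (by positivity)]
        congr 1
        rw [Real.exp_neg]
        have := Real.exp_pos K
        field_simp
        ring
    _ ≤ ENNReal.ofReal (4 * c * Real.exp K) * muExpInv β (Set.Ioo (x - δ) (x + δ)) :=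
        mul_le_mul_right hlow _

lemma part1 (β : ℝ) (hβ : 0 < β) :
    Tendsto (fun x : ℝ =>
        muExpInv β (Set.Ioo (-(2 * x)) (2 * x)) / muExpInv β (Set.Ioo (-x) x))
      (nhdsWithin 0 (Set.Ioi 0)) (nhds (⊤ : ℝ≥0∞)) := by
  set k : ℝ := 1 - (2 / 3 : ℝ) ^ β with hkdef
  have hk : 0 < k := by
    have h : (2 / 3 : ℝ) ^ β < 1 :=
      Real.rpow_lt_one (by norm_num) (by norm_num) hβ
    rw [hkdef]; linarith
  -- the auxiliary real function
  set G : ℝ → ℝ := fun x => (1 / 2 : ℝ) * Real.exp (k / x ^ β) with hGdef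
  have hGtop : Tendsto G (𝓝[>] (0:ℝ)) atTop := by
    have h1 : Tendsto (fun x : ℝ => x ^ β) (𝓝[>] (0:ℝ)) (𝓝[>] (0:ℝ)) := by
      rw [tendsto_nhdsWithin_iff]
      constructor
      · have hc : ContinuousAt (fun x : ℝ => x ^ β) 0 :=
          Real.continuousAt_rpow_const 0 β (Or.inr hβ.le)
        have := hc.tendsto.mono_left (nhdsWithin_le_nhds (s := Ioi (0:ℝ)))
        simpa [Real.zero_rpow hβ.ne'] using this
      · filter_upwards [self_mem_nhdsWithin] with x hx
        exact Real.rpow_pos_of_pos hx β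
    have h2 : Tendsto (fun y : ℝ => k / y) (𝓝[>] (0:ℝ)) atTop := by
      simpa [div_eq_mul_inv] using tendsto_inv_nhdsGT_zero.const_mul_atTop hk
    have h3 : Tendsto (fun x : ℝ => k / x ^ β) (𝓝[>] (0:ℝ)) atTop := h2.comp h1
    have h4 := (Real.tendsto_exp_atTop.comp h3).const_mul_atTop (by norm_num : (0:ℝ) < 1 / 2)
    exact h4
  have hofG : Tendsto (fun x => ENNReal.ofReal (G x)) (𝓝[>] (0:ℝ)) (𝓝 ⊤) :=
    ENNReal.tendsto_ofReal_atTop.comp hGtop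
  refine tendsto_nhds_top_mono hofG ?_
  filter_upwards [self_mem_nhdsWithin] with x hx
  have hx : (0:ℝ) < x := hx
  have hxpow : (0:ℝ) < x ^ β := Real.rpow_pos_of_pos hx β
  -- numerator lower bound
  set Nr : ℝ := Real.exp (-(1 / (3 / 2 * x) ^ β)) * (x / 2) with hNr
  set Dr : ℝ := Real.exp (-(1 / x ^ β)) * x with hDr
  have hN : ENNReal.ofReal Nr ≤ muExpInv β (Set.Ioo (-(2 * x)) (2 * x)) := by
    have hlow := muExpInv_lower β hβ (a := 3 / 2 * x) (b := 2 * x) (by linarith) (by linarith)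
    have heq : (2 * x - 3 / 2 * x) = x / 2 := by ring
    rw [heq] at hlow
    refine le_trans hlow (measure_mono (Ioo_subset_Ioo (by linarith) le_rfl))
  have hD : muExpInv β (Set.Ioo (-x) x) ≤ ENNReal.ofReal Dr := muExpInv_den_upper β hβ hx
  have hDpos : 0 < Dr := by positivity
  have hratio : Nr / Dr = G x := by
    have h32 : ((3:ℝ) / 2 * x) ^ β = (3 / 2 : ℝ) ^ β * x ^ β :=
      Real.mul_rpow (by norm_num) hx.le
    have h32pos : (0:ℝ) < (3 / 2 : ℝ) ^ β := Real.rpow_pos_of_pos (by norm_num) β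
    have hinv : ((3:ℝ) / 2) ^ β * (2 / 3 : ℝ) ^ β = 1 := by
      rw [← Real.mul_rpow (by norm_num) (by norm_num)]
      norm_num
    have hexparg : -(1 / (3 / 2 * x) ^ β) = k / x ^ β + -(1 / x ^ β) := by
      rw [h32, hkdef]
      field_simp
      nlinarith [hinv, hxpow, h32pos]
    have hGx : G x = 1 / 2 * Real.exp (k / x ^ β) := rfl
    rw [hNr, hDr, hGx, hexparg, Real.exp_add]
    have h1 := Real.exp_pos (k / x ^ β)
    have h2 := Real.exp_pos (-(1 / x ^ β))
    field_simp
  calc ENNReal.ofReal (G x) = ENNReal.ofReal Nr / ENNReal.ofReal Dr := by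
        rw [← hratio, ENNReal.ofReal_div_of_pos hDpos]
    _ ≤ muExpInv β (Set.Ioo (-(2 * x)) (2 * x)) / muExpInv β (Set.Ioo (-x) x) :=
        ENNReal.div_le_div hN hD

/-- for `β > 0`, the measure `dμ = e^{-1/x^β}dx` on `[0,∞)` is
not locally doubling at `0`, i.e. `μ(B(0,2x))/μ(B(0,x)) → ∞` as `x → 0⁺`, yet
for every `c > 1`, `δ > 0`, and `x ≥ 0` one has
`μ(B(x,cδ)) ≤ 4c·e^{(2/δ)^β}·μ(B(x,δ))`. -/
theorem muExpInv_not_locally_doubling_but_cdoubling (β : ℝ) (hβ : 0 < β) :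
    Tendsto (fun x : ℝ =>
        muExpInv β (Set.Ioo (-(2 * x)) (2 * x)) / muExpInv β (Set.Ioo (-x) x))
      (nhdsWithin 0 (Set.Ioi 0)) (nhds (⊤ : ℝ≥0∞)) ∧
    ∀ c : ℝ, 1 < c → ∀ δ : ℝ, 0 < δ → ∀ x : ℝ, 0 ≤ x →
      muExpInv β (Set.Ioo (x - c * δ) (x + c * δ)) ≤
        ENNReal.ofReal (4 * c * Real.exp ((2 / δ) ^ β)) *
          muExpInv β (Set.Ioo (x - δ) (x + δ)) := by
  exact ⟨part1 β hβ, part2 β hβ⟩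
end

section
/- Let μ on ℝ₊ (with Euclidean distance) be given by dμ = e^{x^β} dx with β ∈ (1,∞). Then μ(ℝ₊) = ∞ and μ is integrable in the sense that for every r > 0, ∫_{ℝ₊} 1/μ(B(x,r)) dμ(x) < ∞. -/
open Set MeasureTheory Real
open scoped ENNReal

lemma myIntegrableOn_exp_neg_mul_rpow {p b : ℝ} (hp : 0 < p) (hb : 0 < b) :
    IntegrableOn (fun x : ℝ => Real.exp (-b * x ^ p)) (Ioi 0) := by
  have h0 : IntegrableOn (fun y : ℝ => y ^ (1/p - 1) * Real.exp (-b * y)) (Ioi 0) := by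
    have := integrableOn_rpow_mul_exp_neg_mul_rpow
      (s := 1/p - 1) (p := 1) (b := b) (by
        have : (0:ℝ) < 1/p := by positivity
        linarith) one_pos hb
    simpa using this
  have h := (integrableOn_Ioi_comp_rpow_iff'
    (fun y : ℝ => y ^ (1/p - 1) * Real.exp (-b * y)) hp.ne').mpr h0
  refine h.congr_fun (fun x hx => ?_) measurableSet_Ioi
  have hx : (0:ℝ) < x := hx
  have h1 : (x ^ p) ^ (1/p - 1) = x ^ (p * (1/p - 1)) := by
    rw [← Real.rpow_mul hx.le]
  have h2 : p * (1/p - 1) = 1 - p := by field_simp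
  beta_reduce
  rw [smul_eq_mul, h1, h2, ← mul_assoc, ← Real.rpow_add hx]
  rw [show p - 1 + (1 - p) = 0 by ring, Real.rpow_zero, one_mul]

lemma myBernoulli {β : ℝ} (hβ : 1 < β) {x c : ℝ} (hx : 0 < x) (hc : 0 < c) :
    x ^ β + β * c * x ^ (β - 1) ≤ (x + c) ^ β := by
  have h1 : (0:ℝ) ≤ c / x := by positivity
  have hb := one_add_mul_self_le_rpow_one_add (by linarith : (-1:ℝ) ≤ c / x) hβ.le
  have hxb : (0:ℝ) ≤ x ^ β := Real.rpow_nonneg hx.le β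
  have h2 : x ^ β * (1 + β * (c / x)) ≤ x ^ β * (1 + c / x) ^ β :=
    mul_le_mul_of_nonneg_left hb hxb
  have h3 : x ^ β * (1 + c / x) ^ β = (x + c) ^ β := by
    rw [← Real.mul_rpow hx.le (by linarith)]
    congr 1
    field_simp
  have h4 : x ^ β * (1 + β * (c / x)) = x ^ β + β * c * x ^ (β - 1) := by
    rw [Real.rpow_sub hx, Real.rpow_one]
    field_simp
  rw [h4, h3] at h2
  exact h2

/-- The measure `dμ = e^{x^β} dx` on `ℝ₊ = (0,∞)`. -/
noncomputable def muExpPos (β : ℝ) : Measure ℝ :=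
  (volume.restrict (Set.Ioi (0 : ℝ))).withDensity fun x => ENNReal.ofReal (Real.exp (x ^ β))

/-- for `β ∈ (1,∞)`, the measure `dμ = e^{x^β}dx` on `ℝ₊` has
infinite total mass and is integrable: `∫ 1/μ(B(x,r)) dμ(x) < ∞` for every
`r > 0`. -/
theorem muExpPos_infinite_and_integrable (β : ℝ) (hβ : 1 < β) :
    muExpPos β Set.univ = ⊤ ∧
    ∀ r : ℝ, 0 < r →
      (∫⁻ x, (muExpPos β (Set.Ioo (x - r) (x + r)))⁻¹ ∂(muExpPos β)) < ⊤ := by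
  have hβ0 : (0:ℝ) < β := by linarith
  have hmeas : Measurable fun x : ℝ => ENNReal.ofReal (Real.exp (x ^ β)) := by
    fun_prop
  constructor
  · rw [muExpPos, withDensity_apply _ MeasurableSet.univ, setLIntegral_univ]
    refine eq_top_iff.mpr ?_
    calc (⊤:ℝ≥0∞) = volume (Ioi (0:ℝ)) := Real.volume_Ioi.symm
      _ = ∫⁻ _ in Ioi (0:ℝ), 1 := (setLIntegral_one _).symm
      _ ≤ ∫⁻ x in Ioi (0:ℝ), ENNReal.ofReal (Real.exp (x ^ β)) := by
          refine setLIntegral_mono hmeas fun x hx => ?_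
          have h1 : (1:ℝ) ≤ Real.exp (x ^ β) :=
            Real.one_le_exp (Real.rpow_nonneg (le_of_lt hx) β)
          calc (1:ℝ≥0∞) = ENNReal.ofReal 1 := ENNReal.ofReal_one.symm
            _ ≤ _ := ENNReal.ofReal_le_ofReal h1
  · intro r hr
    have hrne : r ≠ 0 := hr.ne'
    set c : ℝ := r / 2 with hc
    have hc0 : 0 < c := by positivity
    have hb0 : 0 < β * c := by positivity
    have hp0 : 0 < β - 1 := by linarith
    have hint : IntegrableOn (fun x : ℝ => (2/r) * Real.exp (-(β*c) * x ^ (β-1))) (Ioi 0) :=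
      (myIntegrableOn_exp_neg_mul_rpow hp0 hb0).const_mul _
    have hfin := hint.setLIntegral_lt_top
    rw [muExpPos, lintegral_withDensity_eq_lintegral_mul_non_measurable _ hmeas
      (ae_of_all _ fun x => ENNReal.ofReal_lt_top)]
    refine lt_of_le_of_lt (setLIntegral_mono' measurableSet_Ioi ?_) hfin
    intro x hx
    have hx0 : (0:ℝ) < x := hx
    simp only [Pi.mul_apply]
    -- lower bound for the ball measure
    have hsub : Ioo (x+c) (x+r) ⊆ Ioo (x-r) (x+r) := Ioo_subset_Ioo (by linarith) le_rfl
    have hsub2 : Ioo (x+c) (x+r) ⊆ Ioi (0:ℝ) := fun t ht => lt_trans (by linarith) ht.1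
    have hlow : ENNReal.ofReal (c * Real.exp ((x+c)^β)) ≤ muExpPos β (Ioo (x-r) (x+r)) := by
      refine le_trans ?_ (measure_mono hsub)
      rw [muExpPos, withDensity_apply _ measurableSet_Ioo,
        Measure.restrict_restrict measurableSet_Ioo, inter_eq_self_of_subset_left hsub2]
      calc ENNReal.ofReal (c * Real.exp ((x+c)^β))
          = ENNReal.ofReal (Real.exp ((x+c)^β)) * volume (Ioo (x+c) (x+r)) := by
            rw [Real.volume_Ioo, show x + r - (x+c) = c by rw [hc]; ring,
              ← ENNReal.ofReal_mul (Real.exp_nonneg _), mul_comm]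
        _ = ∫⁻ _ in Ioo (x+c) (x+r), ENNReal.ofReal (Real.exp ((x+c)^β)) := by
            rw [setLIntegral_const]
        _ ≤ ∫⁻ t in Ioo (x+c) (x+r), ENNReal.ofReal (Real.exp (t^β)) := by
            refine setLIntegral_mono hmeas fun t ht => ?_
            exact ENNReal.ofReal_le_ofReal (Real.exp_le_exp.mpr
              (Real.rpow_le_rpow (by linarith [ht.1]) (le_of_lt ht.1) hβ0.le))
    -- the real pointwise estimate
    have hkey : Real.exp (x^β) / (c * Real.exp ((x+c)^β))
        ≤ (2/r) * Real.exp (-(β*c) * x^(β-1)) := by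
      have h1 := myBernoulli hβ hx0 hc0
      have h2 : Real.exp (x^β - (x+c)^β) ≤ Real.exp (-(β*c) * x^(β-1)) := by
        apply Real.exp_le_exp.mpr
        nlinarith [h1]
      have h3 : Real.exp (x^β) / (c * Real.exp ((x+c)^β))
          = (1/c) * Real.exp (x^β - (x+c)^β) := by
        rw [Real.exp_sub]
        field_simp
      have h4 : (1:ℝ)/c = 2/r := by rw [hc, one_div_div]
      rw [h3, h4]
      exact mul_le_mul_of_nonneg_left h2 (by positivity)
    have hpos : (0:ℝ) < c * Real.exp ((x+c)^β) := by positivity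
    calc ENNReal.ofReal (Real.exp (x^β)) * (muExpPos β (Ioo (x-r) (x+r)))⁻¹
        ≤ ENNReal.ofReal (Real.exp (x^β)) * (ENNReal.ofReal (c * Real.exp ((x+c)^β)))⁻¹ :=
          mul_le_mul_right (ENNReal.inv_le_inv.mpr hlow) _
      _ = ENNReal.ofReal (Real.exp (x^β) / (c * Real.exp ((x+c)^β))) := by
          rw [ENNReal.ofReal_div_of_pos hpos, div_eq_mul_inv]
      _ ≤ ENNReal.ofReal ((2/r) * Real.exp (-(β*c) * x^(β-1))) :=
          ENNReal.ofReal_le_ofReal hkey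
end

section
/- Let (X,τ) be a topological space and μ a Borel measure on X with μ(X) < ∞. Then the following are equivalent: (i) every open set U ⊆ X can be written as U = F ∪ Z where F is an F_σ set and Z is a μ-null set; (ii) for every Borel set B ⊆ X, μ(B) = sup{μ(C) : C closed, C ⊆ B}. -/
open Set MeasureTheory
open scoped ENNReal

variable {X : Type*}

/-- An `F_σ` set: a countable union of closed sets. -/
def IsFSigma [TopologicalSpace X] (F : Set X) : Prop :=
  ∃ g : ℕ → Set X, (∀ n, IsClosed (g n)) ∧ F = ⋃ n, g n

lemma aux_inner {Y : Type*} [TopologicalSpace Y] [MeasurableSpace Y] [BorelSpace Y]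
    (ν : Measure Y) [IsFiniteMeasure ν] (H : ν.InnerRegularWRT IsClosed IsOpen)
    {B : Set Y} (hB : MeasurableSet B) :
    ν B = ⨆ (C : Set Y) (_ : IsClosed C ∧ C ⊆ B), ν C := by
  haveI : ν.WeaklyRegular := Measure.InnerRegularWRT.weaklyRegular_of_finite ν H
  have h3 : ν.InnerRegularWRT IsClosed (fun s => MeasurableSet s ∧ ν s ≠ ∞) :=
    Measure.InnerRegularWRT.measurableSet_of_isOpen Measure.WeaklyRegular.innerRegular
      (fun s U hs hU => hs.sdiff hU)
  apply le_antisymm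
  · rw [h3.measure_eq_iSup ⟨hB, measure_ne_top ν B⟩]
    refine iSup_le fun K => iSup_le fun hKB => iSup_le fun hK => ?_
    exact le_iSup_of_le K (le_iSup_of_le ⟨hK, hKB⟩ le_rfl)
  · exact iSup_le fun C => iSup_le fun hC => measure_mono hC.2

/-- for a finite Borel measure `μ` on a topological space, the
following are equivalent: (i) every open set is the union of an `F_σ` set and
a `μ`-null set; (ii) every Borel set has measure equal to the supremum of the
measures of its closed subsets. -/
theorem open_eq_fsigma_union_null_iff_inner_regular
    [TopologicalSpace X] [m : MeasurableSpace X]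
    (hborel : ∀ s : Set X, IsOpen s → MeasurableSet s)
    (μ : Measure X) (hfin : μ Set.univ < ⊤) :
    (∀ U : Set X, IsOpen U →
        ∃ F Z : Set X, IsFSigma F ∧ MeasurableSet Z ∧ μ Z = 0 ∧ U = F ∪ Z) ↔
    (∀ B : Set X, MeasurableSet[borel X] B →
        μ B = ⨆ (C : Set X) (_ : IsClosed C ∧ C ⊆ B), μ C) := by
  have hle : borel X ≤ m := by
    rw [borel]
    exact MeasurableSpace.generateFrom_le hborel
  have hopen : ∀ U : Set X, IsOpen U → MeasurableSet[borel X] U := fun U hU =>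
    MeasurableSpace.measurableSet_generateFrom hU
  have hclosed : ∀ C : Set X, IsClosed C → MeasurableSet[borel X] C := fun C hC => by
    simpa using MeasurableSet.compl (hopen Cᶜ hC.isOpen_compl)
  set ν : @Measure X (borel X) := μ.trim hle with hν
  have hνeq : ∀ s : Set X, MeasurableSet[borel X] s → ν s = μ s := fun s hs =>
    trim_measurableSet_eq hle hs
  have hBS : @BorelSpace X _ (borel X) := @BorelSpace.mk X _ (borel X) rfl
  have hFin : @IsFiniteMeasure X (borel X) ν := by
    refine @IsFiniteMeasure.mk X (borel X) ν ?_
    rw [hνeq univ (@MeasurableSet.univ X (borel X))]; exact hfin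
  constructor
  · -- (i) → (ii)
    intro h1 B hB
    have H : ν.InnerRegularWRT IsClosed IsOpen := by
      intro U hU r hr
      rw [hνeq U (hopen U hU)] at hr
      obtain ⟨F, Z, ⟨g, hg, rfl⟩, hZm, hZ0, hUFZ⟩ := h1 U hU
      have hμU : μ U ≤ μ (⋃ n, g n) := by
        calc μ U = μ ((⋃ n, g n) ∪ Z) := by rw [hUFZ]
        _ ≤ μ (⋃ n, g n) + μ Z := measure_union_le _ _
        _ = μ (⋃ n, g n) := by rw [hZ0, add_zero]
      rw [measure_iUnion_eq_iSup_accumulate] at hμU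
      obtain ⟨n, hn⟩ := lt_iSup_iff.mp (lt_of_lt_of_le hr hμU)
      have hKc : IsClosed (accumulate g n) := by
        rw [Set.accumulate_def]
        exact (Set.finite_Iic n).isClosed_biUnion fun i _ => hg i
      have hKU : accumulate g n ⊆ U :=
        (Set.accumulate_subset_iUnion n).trans (hUFZ ▸ Set.subset_union_left)
      exact ⟨accumulate g n, hKU, hKc, by rwa [hνeq _ (hclosed _ hKc)]⟩
    have key := @aux_inner X _ (borel X) hBS ν hFin H B hB
    rw [hνeq B hB] at key
    rw [key]
    refine le_antisymm ?_ ?_ <;>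
      refine iSup_le fun C => iSup_le fun hC => le_iSup_of_le C (le_iSup_of_le hC ?_)
    · rw [hνeq C (hclosed C hC.1)]
    · rw [hνeq C (hclosed C hC.1)]
  · -- (ii) → (i)
    intro h2 U hU
    have hμU := h2 U (hopen U hU)
    have hUfin : μ U ≠ ∞ := (lt_of_le_of_lt (measure_mono (subset_univ U)) hfin).ne
    have hC : ∀ n : ℕ, ∃ C : Set X, IsClosed C ∧ C ⊆ U ∧ μ U < μ C + ((n : ℝ≥0∞) + 1)⁻¹ := by
      intro n
      have hinv0 : ((n : ℝ≥0∞) + 1)⁻¹ ≠ 0 := by simp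
      rcases lt_or_ge (μ U) (((n : ℝ≥0∞) + 1)⁻¹) with hsm | hbig
      · exact ⟨∅, isClosed_empty, empty_subset U, lt_of_lt_of_le hsm le_add_self⟩
      · have h0 : μ U ≠ 0 := fun h => by
          rw [h] at hbig
          exact hinv0 (le_antisymm hbig zero_le)
        have hlt : μ U - ((n : ℝ≥0∞) + 1)⁻¹ < μ U :=
          ENNReal.sub_lt_self hUfin h0 hinv0
        conv_rhs at hlt => rw [hμU]
        obtain ⟨C, hC1⟩ := lt_iSup_iff.mp hlt
        obtain ⟨⟨hCc, hCU⟩, hCμ⟩ := lt_iSup_iff.mp hC1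
        exact ⟨C, hCc, hCU, ENNReal.lt_add_of_sub_lt_right (Or.inl hUfin) hCμ⟩
    choose C hCc hCU hCμ using hC
    have hFm : MeasurableSet (⋃ n, C n) := MeasurableSet.iUnion fun n => by
      simpa using (hborel _ (hCc n).isOpen_compl).compl
    have hFU : (⋃ n, C n) ⊆ U := Set.iUnion_subset hCU
    refine ⟨⋃ n, C n, U \ ⋃ n, C n, ⟨C, hCc, rfl⟩, (hborel U hU).diff hFm, ?_, ?_⟩
    · have hdiff : μ (U \ ⋃ n, C n) = μ U - μ (⋃ n, C n) :=
        measure_diff hFU hFm.nullMeasurableSet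
          ((lt_of_le_of_lt (measure_mono (hFU.trans (subset_univ U))) hfin).ne)
      by_contra h0
      obtain ⟨k, hk⟩ := ENNReal.exists_inv_nat_lt h0
      have hle1 : μ (U \ ⋃ n, C n) ≤ ((k : ℝ≥0∞))⁻¹ := by
        rw [hdiff]
        refine tsub_le_iff_right.mpr ?_
        calc μ U ≤ μ (C k) + ((k : ℝ≥0∞) + 1)⁻¹ := (hCμ k).le
        _ ≤ μ (⋃ n, C n) + (k : ℝ≥0∞)⁻¹ := by
            gcongr
            · exact Set.subset_iUnion C k
            · exact le_self_add
        _ = (k : ℝ≥0∞)⁻¹ + μ (⋃ n, C n) := add_comm _ _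
      exact absurd hle1 (not_le.mpr hk)
    · rw [Set.union_diff_cancel' le_rfl hFU]
end

section
/- (Lusin-type theorem) Let (X,τ,μ) be a topological space with a nonnegative Borel regular measure μ such that μ(X) < ∞, and suppose every open set U ⊆ X can be written as U = F ∪ Z where F is F_σ and Z is μ-null. Then for any measurable function u: X → ℝ∪{±∞} which is finite a.e. and any ε > 0, there exists a closed set G_ε ⊆ X such that μ(X \ G_ε) < ε and the restriction of u to G_ε is continuous. -/
open Set MeasureTheory Filter Topology
open scoped ENNReal

variable {X : Type*}

lemma lusin_geom : ∑' n : ℕ, (2⁻¹ : ℝ≥0∞) ^ (n + 2) = 2⁻¹ := by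
  simp_rw [pow_add]
  rw [ENNReal.tsum_mul_right, ENNReal.tsum_geometric, ENNReal.one_sub_inv_two,
    inv_inv, sq, ← mul_assoc, ENNReal.mul_inv_cancel (by norm_num) (by norm_num), one_mul]

lemma lusin_tsum_le_half {δ : ℝ≥0∞} {a : ℕ → ℝ≥0∞} (h : ∀ n, a n ≤ δ / 2 ^ (n + 2)) :
    ∑' n, a n ≤ δ / 2 := by
  calc ∑' n, a n ≤ ∑' n, δ / 2 ^ (n + 2) := ENNReal.tsum_le_tsum h
    _ = δ / 2 := by
        have h2 : ∀ n : ℕ, δ / 2 ^ (n + 2) = δ * (2⁻¹ : ℝ≥0∞) ^ (n + 2) := by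
          intro n; rw [div_eq_mul_inv, ← ENNReal.inv_pow]
        simp_rw [h2]
        rw [ENNReal.tsum_mul_left, lusin_geom, div_eq_mul_inv]

section Aux

variable [TopologicalSpace X] [m : MeasurableSpace X]

/-- Inner approximation by closed sets. -/
def GoodSet (μ : Measure X) (A : Set X) : Prop :=
  ∀ δ : ℝ≥0∞, 0 < δ → ∃ C : Set X, IsClosed C ∧ C ⊆ A ∧ μ (A \ C) < δ

lemma goodSet_of_small {μ : Measure X} {A : Set X}
    (h : ∀ δ : ℝ≥0∞, 0 < δ → δ < ⊤ → ∃ C : Set X, IsClosed C ∧ C ⊆ A ∧ μ (A \ C) < δ) :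
    GoodSet μ A := by
  intro δ hδ
  obtain ⟨C, h1, h2, h3⟩ := h (min δ 1) (lt_min hδ one_pos)
    (lt_of_le_of_lt (min_le_right _ _) (by norm_num))
  exact ⟨C, h1, h2, h3.trans_le (min_le_left _ _)⟩

lemma goodSet_open (μ : Measure X)
    (hborel : ∀ s : Set X, IsOpen s → MeasurableSet s)
    (hfin : μ Set.univ < ⊤)
    (hFσ : ∀ U : Set X, IsOpen U →
      ∃ F Z : Set X, IsFSigma F ∧ MeasurableSet Z ∧ μ Z = 0 ∧ U = F ∪ Z)
    {U : Set X} (hU : IsOpen U) : GoodSet μ U := by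
  intro δ hδ
  obtain ⟨F, Z, ⟨g, hgc, rfl⟩, hZm, hZ0, hUFZ⟩ := hFσ U hU
  set K : ℕ → Set X := fun n => ⋃ k ∈ Finset.range (n + 1), g k with hK
  have hKc : ∀ n, IsClosed (K n) := fun n => isClosed_biUnion_finset (fun i _ => hgc i)
  have hKU : ∀ n, K n ⊆ U := by
    intro n x hx
    simp only [hK, mem_iUnion] at hx
    obtain ⟨k, _, hk⟩ := hx
    rw [hUFZ]; exact Or.inl (mem_iUnion.2 ⟨k, hk⟩)
  have hmeasK : ∀ n, MeasurableSet (K n) := by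
    intro n
    have := (hborel _ (hKc n).isOpen_compl).compl
    rwa [compl_compl] at this
  have hUK : (⋃ n, K n) = ⋃ n, g n := by
    apply subset_antisymm
    · exact iUnion_subset fun n => iUnion₂_subset fun k _ => subset_iUnion g k
    · refine iUnion_subset fun n => ?_
      refine subset_trans ?_ (subset_iUnion K n)
      intro x hx
      simp only [hK, mem_iUnion]
      exact ⟨n, Finset.mem_range.mpr (Nat.lt_succ_self n), hx⟩
  have hinter : (⋂ n, (U \ K n)) = U \ ⋃ n, g n := by
    rw [← hUK, diff_iUnion]
  have h0 : μ (⋂ n, (U \ K n)) = 0 := by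
    rw [hinter]
    refine measure_mono_null ?_ hZ0
    intro x hx
    rcases (hUFZ ▸ hx.1) with h | h
    · exact absurd h hx.2
    · exact h
  have htend : Tendsto (fun n => μ (U \ K n)) atTop (nhds 0) := by
    have := tendsto_measure_iInter_atTop (μ := μ) (s := fun n => U \ K n)
      (fun n => ((hborel U hU).diff (hmeasK n)).nullMeasurableSet)
      (fun i j hij => diff_subset_diff_right
        (by
          intro x hx
          simp only [hK, mem_iUnion] at hx ⊢
          obtain ⟨k, hk, hxk⟩ := hx
          exact ⟨k, Finset.mem_range.mpr (lt_of_lt_of_le (Finset.mem_range.mp hk)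
            (Nat.succ_le_succ hij)), hxk⟩))
      ⟨0, (lt_of_le_of_lt (measure_mono (subset_univ _)) hfin).ne⟩
    rw [h0] at this
    exact this
  obtain ⟨n, hn⟩ := (htend.eventually_lt_const hδ).exists
  exact ⟨K n, hKc n, hKU n, hn⟩

/-- Every Borel set (and its complement) can be approximated from inside by closed sets. -/
lemma goodSet_borel (μ : Measure X)
    (hborel : ∀ s : Set X, IsOpen s → MeasurableSet s)
    (hfin : μ Set.univ < ⊤)
    (hFσ : ∀ U : Set X, IsOpen U →
      ∃ F Z : Set X, IsFSigma F ∧ MeasurableSet Z ∧ μ Z = 0 ∧ U = F ∪ Z) :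
    ∀ B : Set X, MeasurableSet[borel X] B →
      MeasurableSet B ∧ GoodSet μ B ∧ GoodSet μ Bᶜ := by
  have hclosed_meas : ∀ {C : Set X}, IsClosed C → MeasurableSet C := by
    intro C hC
    have := (hborel _ hC.isOpen_compl).compl
    rwa [compl_compl] at this
  intro B hB
  refine MeasurableSpace.generateFrom_induction {s : Set X | IsOpen s}
    (fun s _ => MeasurableSet s ∧ GoodSet μ s ∧ GoodSet μ sᶜ) ?_ ?_ ?_ ?_ B hB
  · intro U hU _
    exact ⟨hborel U hU, goodSet_open μ hborel hfin hFσ hU,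
      fun δ hδ => ⟨Uᶜ, (hU : IsOpen U).isClosed_compl, Subset.rfl, by simpa using hδ⟩⟩
  · refine ⟨MeasurableSet.empty, ?_, ?_⟩
    · exact fun δ hδ => ⟨∅, isClosed_empty, Subset.rfl, by simpa using hδ⟩
    · exact fun δ hδ => ⟨univ, isClosed_univ, by simp, by simpa using hδ⟩
  · rintro A _ ⟨h1, h2, h3⟩
    exact ⟨h1.compl, h3, by rwa [compl_compl]⟩
  · rintro f _ hf
    refine ⟨MeasurableSet.iUnion fun n => (hf n).1, ?_, ?_⟩
    · -- inner approximation of the union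
      apply goodSet_of_small
      intro δ hδ hδtop
      have hpos : ∀ n : ℕ, (0 : ℝ≥0∞) < δ / 2 ^ (n + 2) := fun n =>
        ENNReal.div_pos hδ.ne' (by exact ENNReal.pow_ne_top (by norm_num))
      choose C hCc hCs hCμ using fun n => (hf n).2.1 _ (hpos n)
      set K : ℕ → Set X := fun N => ⋃ k ∈ Finset.range (N + 1), C k with hKdef
      have hKc : ∀ N, IsClosed (K N) := fun N =>
        isClosed_biUnion_finset (fun i _ => hCc i)
      have hKs : ∀ N, K N ⊆ ⋃ n, f n := fun N =>
        iUnion₂_subset fun k _ => (hCs k).trans (subset_iUnion f k)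
      have hdiff : ((⋃ n, f n) \ ⋃ n, C n) ⊆ ⋃ n, (f n \ C n) := by
        rintro x ⟨hx1, hx2⟩
        obtain ⟨n, hn⟩ := mem_iUnion.mp hx1
        by_contra hcon
        simp only [mem_iUnion, not_exists, mem_diff, not_and, not_not] at hcon
        exact hx2 (mem_iUnion.mpr ⟨n, hcon n hn⟩)
      have hsum : μ ((⋃ n, f n) \ ⋃ n, C n) ≤ δ / 2 :=
        le_trans (le_trans (measure_mono hdiff) (measure_iUnion_le _))
          (lusin_tsum_le_half fun n => (hCμ n).le)
      have hmono : Antitone (fun N => (⋃ n, f n) \ K N) := by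
        intro i j hij
        refine diff_subset_diff_right ?_
        intro x hx
        simp only [hKdef, mem_iUnion] at hx ⊢
        obtain ⟨k, hk, hxk⟩ := hx
        exact ⟨k, Finset.mem_range.mpr (lt_of_lt_of_le (Finset.mem_range.mp hk)
          (Nat.succ_le_succ hij)), hxk⟩
      have hiK : (⋃ N, K N) = ⋃ n, C n := by
        apply subset_antisymm
        · exact iUnion_subset fun N => iUnion₂_subset fun k _ => subset_iUnion C k
        · refine iUnion_subset fun n => subset_trans ?_ (subset_iUnion K n)
          intro x hx
          simp only [hKdef, mem_iUnion]
          exact ⟨n, Finset.mem_range.mpr (Nat.lt_succ_self n), hx⟩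
      have hinter : (⋂ N, ((⋃ n, f n) \ K N)) = (⋃ n, f n) \ ⋃ n, C n := by
        rw [← hiK, diff_iUnion]
      have htend : Tendsto (fun N => μ ((⋃ n, f n) \ K N)) atTop
          (nhds (μ ((⋃ n, f n) \ ⋃ n, C n))) := by
        have := tendsto_measure_iInter_atTop (μ := μ) (s := fun N => (⋃ n, f n) \ K N)
          (fun N => ((MeasurableSet.iUnion fun n => (hf n).1).diff
            (hclosed_meas (hKc N))).nullMeasurableSet)
          hmono
          ⟨0, (lt_of_le_of_lt (measure_mono (subset_univ _)) hfin).ne⟩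
        rwa [hinter] at this
      have hlim : μ ((⋃ n, f n) \ ⋃ n, C n) < δ :=
        lt_of_le_of_lt hsum (ENNReal.half_lt_self hδ.ne' hδtop.ne)
      obtain ⟨N, hN⟩ := (htend.eventually_lt_const hlim).exists
      exact ⟨K N, hKc N, hKs N, hN⟩
    · -- inner approximation of the complement of the union
      apply goodSet_of_small
      intro δ hδ hδtop
      have hpos : ∀ n : ℕ, (0 : ℝ≥0∞) < δ / 2 ^ (n + 2) := fun n =>
        ENNReal.div_pos hδ.ne' (ENNReal.pow_ne_top (by norm_num))
      choose C hCc hCs hCμ using fun n => (hf n).2.2 _ (hpos n)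
      refine ⟨⋂ n, C n, isClosed_iInter hCc, ?_, ?_⟩
      · rw [compl_iUnion]
        exact iInter_mono fun n => hCs n
      · have hdiff : ((⋃ n, f n)ᶜ \ ⋂ n, C n) ⊆ ⋃ n, ((f n)ᶜ \ C n) := by
          rintro x ⟨hx1, hx2⟩
          rw [compl_iUnion] at hx1
          have hex : ∃ n, x ∉ C n := by
            by_contra hcon
            push_neg at hcon
            exact hx2 (mem_iInter.mpr hcon)
          obtain ⟨n, hn⟩ := hex
          exact mem_iUnion.mpr ⟨n, mem_iInter.mp hx1 n, hn⟩
        calc μ ((⋃ n, f n)ᶜ \ ⋂ n, C n) ≤ ∑' n, μ ((f n)ᶜ \ C n) :=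
              le_trans (measure_mono hdiff) (measure_iUnion_le _)
          _ ≤ δ / 2 := lusin_tsum_le_half fun n => (hCμ n).le
          _ < δ := ENNReal.half_lt_self hδ.ne' hδtop.ne

end Aux

/-- Lusin-type theorem: let `μ` be a finite, Borel regular
measure on a topological space in which every open set is the union of an
`F_σ` set and a null set. Then for every measurable a.e.-finite function
`u : X → ℝ ∪ {±∞}` and every `ε > 0` there is a closed set `G` with
`μ(X \ G) < ε` and `u` restricted to `G` continuous. -/
theorem lusin_type
    [TopologicalSpace X] [m : MeasurableSpace X]
    (hborel : ∀ s : Set X, IsOpen s → MeasurableSet s)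
    (μ : Measure X) (hfin : μ Set.univ < ⊤)
    (hreg : ∀ E : Set X, MeasurableSet E →
      ∃ B : Set X, MeasurableSet[borel X] B ∧ E ⊆ B ∧ μ B = μ E)
    (hFσ : ∀ U : Set X, IsOpen U →
      ∃ F Z : Set X, IsFSigma F ∧ MeasurableSet Z ∧ μ Z = 0 ∧ U = F ∪ Z)
    (u : X → EReal) (hu : Measurable u)
    (hae : μ {x | u x = ⊤ ∨ u x = ⊥} = 0)
    (ε : ℝ≥0∞) (hε : 0 < ε) :
    ∃ G : Set X, IsClosed G ∧ μ Gᶜ < ε ∧ ContinuousOn u G := by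
  -- Every measurable set can be approximated from inside by closed sets.
  have hgood : ∀ E : Set X, MeasurableSet E → GoodSet μ E := by
    intro E hE
    obtain ⟨B, hBb, hEB, hμB⟩ := hreg Eᶜ hE.compl
    obtain ⟨hBm, hBgood, hBcgood⟩ := goodSet_borel μ hborel hfin hFσ B hBb
    have hBE : Bᶜ ⊆ E := compl_subset_comm.mp hEB
    have hnull : μ (E \ Bᶜ) = 0 := by
      have h1 : μ (B ∩ Eᶜ) + μ (B \ Eᶜ) = μ B := measure_inter_add_diff B hE.compl
      rw [inter_eq_self_of_subset_right hEB, hμB] at h1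
      have h2 : μ Eᶜ ≠ ⊤ := (lt_of_le_of_lt (measure_mono (subset_univ _)) hfin).ne
      have h3 : μ (B \ Eᶜ) = 0 := by
        have h4 := (ENNReal.add_right_inj h2 (b := μ (B \ Eᶜ)) (c := 0))
        rw [add_zero] at h4
        exact h4.mp h1
      refine measure_mono_null ?_ h3
      intro x hx
      exact ⟨not_not.mp hx.2, fun h => h hx.1⟩
    intro δ hδ
    obtain ⟨C, hCc, hCs, hCμ⟩ := hBcgood δ hδ
    refine ⟨C, hCc, hCs.trans hBE, ?_⟩
    have hsub : E \ C ⊆ (E \ Bᶜ) ∪ (Bᶜ \ C) := by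
      intro x hx
      by_cases hxB : x ∈ Bᶜ
      · exact Or.inr ⟨hxB, hx.2⟩
      · exact Or.inl ⟨hx.1, hxB⟩
    calc μ (E \ C) ≤ μ (E \ Bᶜ) + μ (Bᶜ \ C) :=
          le_trans (measure_mono hsub) (measure_union_le _ _)
      _ = μ (Bᶜ \ C) := by rw [hnull, zero_add]
      _ < δ := hCμ
  -- countable basis of EReal
  obtain ⟨b, hbc, -, hb⟩ := TopologicalSpace.exists_countable_basis EReal
  have hbnonempty : b.Nonempty := by
    rcases eq_empty_or_nonempty b with h | h
    · exfalso
      have h2 := hb.sUnion_eq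
      rw [h, sUnion_empty] at h2
      exact (univ_nonempty (α := EReal)).ne_empty h2.symm
    · exact h
  obtain ⟨v, hv⟩ := hbc.exists_eq_range hbnonempty
  set E : ℕ → Set X := fun n => u ⁻¹' v n with hEdef
  have hEm : ∀ n, MeasurableSet (E n) := fun n =>
    hu (hb.isOpen (hv ▸ mem_range_self n)).measurableSet
  set ε' := min ε 1 with hε'def
  have hε'pos : 0 < ε' := lt_min hε one_pos
  have hε'top : ε' < ⊤ := lt_of_le_of_lt (min_le_right _ _) (by norm_num)
  have hpos : ∀ n : ℕ, (0 : ℝ≥0∞) < ε' / 2 ^ (n + 3) := fun n =>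
    ENNReal.div_pos hε'pos.ne' (ENNReal.pow_ne_top (by norm_num))
  choose C hCc hCs hCμ using fun n => hgood (E n) (hEm n) _ (hpos n)
  choose D hDc hDs hDμ using fun n => hgood (E n)ᶜ (hEm n).compl _ (hpos n)
  refine ⟨⋂ n, (C n ∪ D n), isClosed_iInter (fun n => (hCc n).union (hDc n)), ?_, ?_⟩
  · rw [compl_iInter]
    have hterm : ∀ n : ℕ, μ (C n ∪ D n)ᶜ ≤ ε' / 2 ^ (n + 2) := by
      intro n
      have hsub : (C n ∪ D n)ᶜ ⊆ (E n \ C n) ∪ ((E n)ᶜ \ D n) := by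
        intro x hx
        rw [mem_compl_iff, mem_union, not_or] at hx
        by_cases hxE : x ∈ E n
        · exact Or.inl ⟨hxE, hx.1⟩
        · exact Or.inr ⟨hxE, hx.2⟩
      have harith : ε' / 2 ^ (n + 3) + ε' / 2 ^ (n + 3) = ε' / 2 ^ (n + 2) := by
        rw [ENNReal.div_add_div_same, ← two_mul,
          show (2 : ℝ≥0∞) ^ (n + 3) = 2 * 2 ^ (n + 2) by rw [pow_succ]; ring,
          ENNReal.mul_div_mul_left _ _ (by norm_num) (by norm_num)]
      calc μ (C n ∪ D n)ᶜ ≤ μ (E n \ C n) + μ ((E n)ᶜ \ D n) :=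
            le_trans (measure_mono hsub) (measure_union_le _ _)
        _ ≤ ε' / 2 ^ (n + 3) + ε' / 2 ^ (n + 3) := add_le_add (hCμ n).le (hDμ n).le
        _ = ε' / 2 ^ (n + 2) := harith
    calc μ (⋃ n, (C n ∪ D n)ᶜ) ≤ ∑' n, μ (C n ∪ D n)ᶜ := measure_iUnion_le _
      _ ≤ ε' / 2 := lusin_tsum_le_half hterm
      _ < ε' := ENNReal.half_lt_self hε'pos.ne' hε'top.ne
      _ ≤ ε := min_le_left _ _
  · rw [continuousOn_iff_continuous_restrict, hb.continuous_iff]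
    intro s hs
    rw [hv] at hs
    obtain ⟨n, rfl⟩ := hs
    have hkey : (⋂ n, C n ∪ D n).restrict u ⁻¹' v n = Subtype.val ⁻¹' (D n)ᶜ := by
      ext x
      simp only [restrict_apply, mem_preimage, mem_compl_iff]
      have hxn : (x : X) ∈ C n ∪ D n := mem_iInter.mp x.2 n
      constructor
      · intro h hD
        exact (hDs n hD) h
      · intro h
        rcases hxn with hC | hD
        · exact hCs n hC
        · exact absurd hD h
    rw [show (⋂ n, C n ∪ D n).domRestrict u = (⋂ n, C n ∪ D n).restrict u from rfl, hkey]
    exact (hDc n).isOpen_compl.preimage continuous_subtype_val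
end
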